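/- arXiv:2510.00007 — 2 statements merged into one kernel-verified Lean document; each statement's English description precedes it below -/
import Mathlib

section
/- For 0<q<1, write α = -log q. Then ∑_{m=1}^∞ m·q^m/(1-q^m) = π²/(6α²) + O(1/α) as α → 0⁺. In particular, if this sum is set equal to n, then α = π/√(6n)·(1+o(1)) as n → ∞. -/
open Real Filter Asymptotics
open scoped Topology

private lemma my_sinh_lb {s : ℝ} (hs : 0 ≤ s) : s ≤ Real.sinh s := by
  rcases hs.eq_or_lt with h | h
  · simp [← h]
  · exact (Real.self_lt_sinh_iff.mpr h).le

private lemma my_sinh_ub {s : ℝ} (h0 : 0 ≤ s) (h1 : s ≤ 1) :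
    Real.sinh s ≤ s + (2/9) * s^3 := by
  have habs : |s| ≤ 1 := by rwa [abs_of_nonneg h0]
  have habs' : |(-s)| ≤ 1 := by rwa [abs_neg]
  have e1 := Real.exp_bound habs (by norm_num : 0 < 3)
  have e2 := Real.exp_bound habs' (by norm_num : 0 < 3)
  simp only [Finset.sum_range_succ, Finset.sum_range_zero, Nat.factorial] at e1 e2
  rw [abs_of_nonneg h0] at e1
  rw [abs_neg, abs_of_nonneg h0] at e2
  rw [abs_sub_le_iff] at e1 e2
  rw [Real.sinh_eq]
  norm_num at e1 e2 ⊢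
  nlinarith [e1.1, e1.2, e2.1, e2.2, pow_nonneg h0 3]

private lemma my_A_lb {t : ℝ} (ht : 0 ≤ t) : t^2 ≤ 4 * Real.sinh (t/2)^2 := by
  have h := my_sinh_lb (by linarith : (0:ℝ) ≤ t/2)
  nlinarith

private lemma my_A_pos {t : ℝ} (ht : 0 < t) : 0 < 4 * Real.sinh (t/2)^2 :=
  lt_of_lt_of_le (by positivity) (my_A_lb ht.le)

private lemma my_head {t : ℝ} (ht : 0 < t) (ht2 : t ≤ 2) :
    1/t^2 - 1/(4 * Real.sinh (t/2)^2) ≤ 1/2 := by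
  have hs0 : (0:ℝ) ≤ t/2 := by linarith
  have hs1 : t/2 ≤ 1 := by linarith
  have h1 := my_sinh_lb hs0
  have h2 := my_sinh_ub hs0 hs1
  have hA1 : t^2 ≤ 4 * Real.sinh (t/2)^2 := my_A_lb ht.le
  have hA2 : 4 * Real.sinh (t/2)^2 ≤ t^2 + t^4/9 + t^6/324 := by nlinarith
  have hApos : 0 < 4 * Real.sinh (t/2)^2 := my_A_pos ht
  have ht6 : t^6 ≤ 4*t^4 := by
    nlinarith [mul_le_mul_of_nonneg_left (show t^2 ≤ 4 by nlinarith) (pow_nonneg ht.le 4)]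
  have htP : t^4 ≤ t^2 * (4 * Real.sinh (t/2)^2) := by nlinarith
  rw [div_sub_div _ _ (by positivity) (ne_of_gt hApos), div_le_iff₀ (by positivity)]
  nlinarith

private lemma my_alg {u : ℝ} (hu : 1 < u) :
    (u^2)⁻¹ / (1 - (u^2)⁻¹)^2 = 1 / (4 * ((u - u⁻¹)/2)^2) := by
  have hu0 : u ≠ 0 := by linarith
  have h2 : u^2 - 1 ≠ 0 := by nlinarith
  have h3 : ((4:ℝ) - u^2*8 + u^4*4) ≠ 0 := by
    have he : (4:ℝ) - u^2*8 + u^4*4 = 4*(u^2-1)^2 := by ring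
    rw [he]
    positivity
  have h4 : ((4:ℝ)*(u*u-1)^2) ≠ 0 := by
    have : u*u - 1 ≠ 0 := by rw [← sq]; exact h2
    positivity
  field_simp
  ring

private lemma my_lambert_term {t : ℝ} (ht : 0 < t) :
    Real.exp (-t) / (1 - Real.exp (-t)) ^ 2 = 1 / (4 * Real.sinh (t / 2) ^ 2) := by
  have hu1 : 1 < Real.exp (t / 2) := Real.one_lt_exp_iff.mpr (by linarith)
  have het : Real.exp t = Real.exp (t/2) ^ 2 := by
    rw [sq, ← Real.exp_add]; congr 1; ring
  rw [Real.sinh_eq, Real.exp_neg t, Real.exp_neg (t/2), het]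
  exact my_alg hu1


private def myG (q : ℝ) (p : ℕ × ℕ) : ℝ := ((p.1 : ℝ) + 1) * q ^ ((p.1 + 1) * (p.2 + 1))

private lemma myG_apply (q : ℝ) (m k : ℕ) :
    myG q (m, k) = ((m : ℝ) + 1) * q ^ ((m + 1) * (k + 1)) := rfl

private lemma my_row {q : ℝ} (h0 : 0 < q) (h1 : q < 1) (m : ℕ) :
    HasSum (fun k : ℕ => myG q (m, k))
      (((m : ℝ) + 1) * q ^ (m + 1) / (1 - q ^ (m + 1))) := by
  have hg : HasSum (fun k : ℕ => (q ^ (m+1)) ^ k) (1 - q ^ (m+1))⁻¹ :=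
    hasSum_geometric_of_lt_one (by positivity) (pow_lt_one₀ h0.le h1 m.succ_ne_zero)
  have h := hg.mul_left (((m : ℝ) + 1) * q ^ (m+1))
  have hfun : (fun k : ℕ => myG q (m, k))
      = fun k => (((m : ℝ) + 1) * q ^ (m+1)) * (q ^ (m+1)) ^ k := by
    funext k
    rw [myG_apply, pow_mul, pow_succ', mul_assoc]
  rw [hfun, div_eq_mul_inv]
  exact h

private lemma my_col {q : ℝ} (h0 : 0 < q) (h1 : q < 1) (k : ℕ) :
    HasSum (fun m : ℕ => myG q (m, k))
      (q ^ (k + 1) / (1 - q ^ (k + 1)) ^ 2) := by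
  have hlt : q ^ (k+1) < 1 := pow_lt_one₀ h0.le h1 k.succ_ne_zero
  have hpos : 0 < q ^ (k+1) := pow_pos h0 _
  have hb : HasSum (fun n : ℕ => (n : ℝ) * (q ^ (k+1)) ^ n)
      (q ^ (k+1) / (1 - q ^ (k+1)) ^ 2) :=
    hasSum_coe_mul_geometric_of_norm_lt_one
      (by rw [Real.norm_eq_abs, abs_of_nonneg hpos.le]; exact hlt)
  have h := (hasSum_nat_add_iff (f := fun n : ℕ => (n : ℝ) * (q ^ (k+1)) ^ n) 1).mpr
    (by simpa using hb)
  have hfun : (fun m : ℕ => myG q (m, k))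
      = fun m : ℕ => ((m + 1 : ℕ) : ℝ) * (q ^ (k+1)) ^ (m+1) := by
    funext m
    rw [myG_apply, ← pow_mul]
    push_cast
    ring_nf
  rw [hfun]
  exact h

private lemma my_summable_G {q : ℝ} (h0 : 0 < q) (h1 : q < 1) : Summable (myG q) := by
  have hq0 : (0:ℝ) ≤ q := h0.le
  have hf : Summable (fun n : ℕ => (n : ℝ) * q ^ n) :=
    (hasSum_coe_mul_geometric_of_norm_lt_one
      (by rw [Real.norm_eq_abs, abs_of_nonneg hq0]; exact h1)).summable
  have hfs : Summable (fun m : ℕ => ((m : ℝ) + 1) * q ^ (m+1)) := by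
    have h' := (summable_nat_add_iff (f := fun n : ℕ => (n : ℝ) * q ^ n) 1).mpr hf
    refine h'.congr fun m => ?_
    push_cast
    ring
  have hgs : Summable (fun k : ℕ => q ^ k) := summable_geometric_of_lt_one hq0 h1
  refine Summable.of_nonneg_of_le (fun p => ?_) (fun p => ?_)
    (hfs.mul_of_nonneg hgs (fun m => by positivity) (fun k => by positivity))
  · unfold myG; positivity
  · show ((p.1 : ℝ) + 1) * q ^ ((p.1 + 1) * (p.2 + 1)) ≤ ((p.1:ℝ)+1) * q ^ (p.1+1) * q ^ p.2
    rw [mul_assoc, ← pow_add]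
    refine mul_le_mul_of_nonneg_left ?_ (by positivity)
    exact pow_le_pow_of_le_one hq0 h1.le (by nlinarith [p.2.zero_le, Nat.zero_le p.1])

private lemma my_swap {q : ℝ} (h0 : 0 < q) (h1 : q < 1) :
    (∑' m : ℕ, ((m : ℝ) + 1) * q ^ (m + 1) / (1 - q ^ (m + 1)))
      = ∑' k : ℕ, q ^ (k + 1) / (1 - q ^ (k + 1)) ^ 2 := by
  have e1 : (∑' m : ℕ, ((m : ℝ) + 1) * q ^ (m + 1) / (1 - q ^ (m + 1)))
      = ∑' m : ℕ, ∑' k : ℕ, myG q (m, k) :=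
    tsum_congr fun m => (my_row h0 h1 m).tsum_eq.symm
  have e2 : (∑' k : ℕ, ∑' m : ℕ, myG q (m, k))
      = ∑' m : ℕ, ∑' k : ℕ, myG q (m, k) :=
    Summable.tsum_comm' (my_summable_G h0 h1) (fun m => (my_row h0 h1 m).summable)
      (fun k => (my_col h0 h1 k).summable)
  have e3 : (∑' k : ℕ, ∑' m : ℕ, myG q (m, k))
      = ∑' k : ℕ, q ^ (k + 1) / (1 - q ^ (k + 1)) ^ 2 :=
    tsum_congr fun k => (my_col h0 h1 k).tsum_eq
  rw [e1, ← e2, e3]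


private lemma my_hasSum_B {α : ℝ} (hα : 0 < α) :
    HasSum (fun k : ℕ => 1 / (α * ((k:ℝ) + 1)) ^ 2) (π ^ 2 / (6 * α ^ 2)) := by
  have h0 : HasSum (fun n : ℕ => 1 / (n:ℝ)^2) (π ^ 2 / 6) := hasSum_zeta_two
  have h1 : HasSum (fun k : ℕ => 1 / ((k:ℝ)+1) ^ 2) (π ^ 2 / 6) := by
    have h := (hasSum_nat_add_iff (f := fun n : ℕ => 1 / (n:ℝ)^2) 1).mpr (by simpa using h0)
    exact_mod_cast h
  have h2 := h1.mul_left (1/α^2)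
  have hfun : (fun k : ℕ => 1 / (α * ((k:ℝ) + 1)) ^ 2)
      = (fun k : ℕ => (1/α^2) * (1/((k:ℝ)+1)^2)) := by
    funext k
    rw [mul_pow]
    field_simp
  rw [hfun, show π^2/(6*α^2) = (1/α^2) * (π^2/6) by ring]
  exact h2

private lemma my_telescope (K : ℕ) (hK : 1 ≤ K) :
    HasSum (fun j : ℕ => 1 / (((j:ℝ) + K) * ((j:ℝ) + K + 1))) (1 / K) := by
  have hK' : (1:ℝ) ≤ (K:ℝ) := by exact_mod_cast hK
  set f : ℕ → ℝ := fun j => 1/((j:ℝ)+K) with hf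
  have hpos : ∀ j : ℕ, (0:ℝ) < (j:ℝ) + K := fun j => by
    have := Nat.cast_nonneg (α := ℝ) j; linarith
  have hterm : ∀ j : ℕ, 1 / (((j:ℝ)+K) * ((j:ℝ)+K+1)) = f j - f (j+1) := by
    intro j
    have h1 := hpos j
    rw [hf]
    simp only [Nat.cast_add, Nat.cast_one]
    rw [div_sub_div _ _ (ne_of_gt h1) (by linarith : ((j:ℝ)+1)+K ≠ 0)]
    rw [div_eq_div_iff (by nlinarith) (by nlinarith)]
    ring
  have hnn : ∀ j : ℕ, 0 ≤ 1 / (((j:ℝ)+K) * ((j:ℝ)+K+1)) := fun j => by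
    have h1 := hpos j; positivity
  have hps : ∀ n : ℕ, ∑ j ∈ Finset.range n, 1 / (((j:ℝ)+K) * ((j:ℝ)+K+1))
      = 1/(K:ℝ) - 1/((n:ℝ)+K) := by
    intro n
    calc ∑ j ∈ Finset.range n, 1 / (((j:ℝ)+K) * ((j:ℝ)+K+1))
        = ∑ j ∈ Finset.range n, (f j - f (j+1)) := Finset.sum_congr rfl fun j _ => hterm j
      _ = f 0 - f n := Finset.sum_range_sub' f n
      _ = 1/(K:ℝ) - 1/((n:ℝ)+K) := by rw [hf]; norm_num
  have hinf : Tendsto (fun n : ℕ => ((n:ℝ)+K)) atTop atTop :=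
    tendsto_atTop_add_const_right _ _ tendsto_natCast_atTop_atTop
  have h0' : Tendsto (fun n : ℕ => 1/((n:ℝ)+K)) atTop (𝓝 0) := by
    simpa [one_div, Pi.inv_def] using hinf.inv_tendsto_atTop
  have htend : Tendsto (fun n : ℕ => 1/(K:ℝ) - 1/((n:ℝ)+K)) atTop (𝓝 (1/(K:ℝ))) := by
    simpa using (tendsto_const_nhds (x := 1/(K:ℝ)) (f := atTop)).sub h0'
  refine (hasSum_iff_tendsto_nat_of_nonneg hnn _).mpr ?_
  rw [show (fun n : ℕ => ∑ j ∈ Finset.range n, 1 / (((j:ℝ)+K) * ((j:ℝ)+K+1)))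
      = fun n : ℕ => 1/(K:ℝ) - 1/((n:ℝ)+K) from funext hps]
  exact htend

private lemma my_sum_eq_S {α : ℝ} (hα : 0 < α) :
    (∑' m : ℕ, ((m : ℝ) + 1) * Real.exp (-α) ^ (m + 1) / (1 - Real.exp (-α) ^ (m + 1)))
      = ∑' k : ℕ, 1 / (4 * Real.sinh (α * ((k:ℝ) + 1) / 2) ^ 2) := by
  rw [my_swap (Real.exp_pos _) (Real.exp_lt_one_iff.mpr (by linarith))]
  refine tsum_congr fun k => ?_
  have he : Real.exp (-α) ^ (k+1) = Real.exp (-(α * ((k:ℝ)+1))) := by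
    rw [← Real.exp_nat_mul]
    congr 1
    push_cast
    ring
  rw [he, my_lambert_term (by positivity)]

private lemma my_GleB {α : ℝ} (hα : 0 < α) (k : ℕ) :
    1 / (4 * Real.sinh (α * ((k:ℝ) + 1) / 2) ^ 2) ≤ 1 / (α * ((k:ℝ) + 1)) ^ 2 := by
  have ht : 0 < α * ((k:ℝ) + 1) := by positivity
  exact one_div_le_one_div_of_le (by positivity) (my_A_lb ht.le)

private lemma my_summable_G' {α : ℝ} (hα : 0 < α) :
    Summable (fun k : ℕ => 1 / (4 * Real.sinh (α * ((k:ℝ) + 1) / 2) ^ 2)) := by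
  refine Summable.of_nonneg_of_le (fun k => by positivity) (fun k => my_GleB hα k)
    (my_hasSum_B hα).summable

private lemma my_upper {α : ℝ} (hα : 0 < α) :
    (∑' m : ℕ, ((m : ℝ) + 1) * Real.exp (-α) ^ (m + 1) / (1 - Real.exp (-α) ^ (m + 1)))
      ≤ π ^ 2 / (6 * α ^ 2) := by
  rw [my_sum_eq_S hα]
  calc (∑' k : ℕ, 1 / (4 * Real.sinh (α * ((k:ℝ) + 1) / 2) ^ 2))
      ≤ ∑' k : ℕ, 1 / (α * ((k:ℝ) + 1)) ^ 2 :=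
        Summable.tsum_le_tsum (my_GleB hα) (my_summable_G' hα) (my_hasSum_B hα).summable
    _ = π ^ 2 / (6 * α ^ 2) := (my_hasSum_B hα).tsum_eq

set_option maxHeartbeats 1000000 in
private lemma my_E_le_gen {B G : ℕ → ℝ} {α : ℝ} (hα : 0 < α) (hα1 : α ≤ 1)
    (hBsum : Summable B) (hGsum : Summable G)
    (hG0 : ∀ k, 0 ≤ G k)
    (hBval : ∀ k : ℕ, B k = 1 / (α * ((k:ℝ) + 1)) ^ 2)
    (hhalf : ∀ k : ℕ, α * ((k:ℝ) + 1) ≤ 2 → B k - G k ≤ 1/2) :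
    ∑' k : ℕ, (B k - G k) ≤ 2 / α := by
  have hDsum : Summable (fun k : ℕ => B k - G k) := hBsum.sub hGsum
  set K := Nat.floor (2/α) with hKdef
  have h2α : (2:ℝ) ≤ 2/α := by rw [le_div_iff₀ hα]; linarith
  have hK1 : 1 ≤ K := Nat.le_floor (by push_cast; linarith)
  have hK1' : (1:ℝ) ≤ (K:ℝ) := by exact_mod_cast hK1
  have hKpos : (0:ℝ) < (K:ℝ) := by linarith
  have hKup : (K:ℝ) ≤ 2/α := Nat.floor_le (by positivity)
  have h1α : (1:ℝ) ≤ 1/α := by rw [le_div_iff₀ hα]; linarith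
  have hKlow : 1/α ≤ (K:ℝ) := by
    have h := Nat.sub_one_lt_floor (2/α)
    have h2 : 2/α = 1/α + 1/α := by ring
    rw [← hKdef] at h
    linarith
  have hKinv : 1/(K:ℝ) ≤ α := by
    rw [div_le_iff₀ hKpos]
    have h := mul_le_mul_of_nonneg_left hKlow hα.le
    rw [mul_one_div, div_self (ne_of_gt hα)] at h
    linarith
  rw [← Summable.sum_add_tsum_nat_add K hDsum]
  have hhead : ∑ k ∈ Finset.range K, (B k - G k) ≤ 1/α := by
    have hone : ∀ k ∈ Finset.range K, B k - G k ≤ 1/2 := by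
      intro k hk
      have hk' : (k:ℝ) + 1 ≤ (K:ℝ) := by
        have := Finset.mem_range.mp hk
        exact_mod_cast Nat.succ_le_of_lt this
      refine hhalf k ?_
      have h1 : α * ((k:ℝ)+1) ≤ α * (K:ℝ) := by nlinarith
      have h2 : α * (K:ℝ) ≤ α * (2/α) := by nlinarith
      have h3 : α * (2/α) = 2 := by field_simp
      linarith
    calc ∑ k ∈ Finset.range K, (B k - G k)
        ≤ ∑ _k ∈ Finset.range K, (1/2 : ℝ) := Finset.sum_le_sum hone
      _ = (K:ℝ)/2 := by simp [Finset.sum_const]; ring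
      _ ≤ (2/α)/2 := by linarith
      _ = 1/α := by ring
  have htail : ∑' j : ℕ, (B (j+K) - G (j+K)) ≤ 1/α := by
    have hTel := (my_telescope K hK1).mul_left (1/α^2)
    have hle : ∀ j : ℕ, B (j+K) - G (j+K)
        ≤ (1/α^2) * (1 / (((j:ℝ) + K) * ((j:ℝ) + K + 1))) := by
      intro j
      have hx : (0:ℝ) < (j:ℝ) + (K:ℝ) := by
        have := Nat.cast_nonneg (α := ℝ) j; linarith
      have hBj : B (j+K) = (1/α^2) * (1 / (((j:ℝ) + K + 1)) ^ 2) := by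
        rw [hBval (j+K)]
        push_cast
        rw [mul_pow]
        field_simp
      have hα2 : (0:ℝ) < 1/α^2 := by positivity
      calc B (j+K) - G (j+K) ≤ B (j+K) := by linarith [hG0 (j+K)]
        _ = (1/α^2) * (1 / (((j:ℝ) + K + 1)) ^ 2) := hBj
        _ ≤ (1/α^2) * (1 / (((j:ℝ) + K) * ((j:ℝ) + K + 1))) := by
            have hmono : (1:ℝ) / (((j:ℝ) + K + 1)) ^ 2
                ≤ 1 / (((j:ℝ) + K) * ((j:ℝ) + K + 1)) :=
              one_div_le_one_div_of_le (by nlinarith) (by nlinarith)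
            nlinarith
    calc ∑' j : ℕ, (B (j+K) - G (j+K))
        ≤ ∑' j : ℕ, (1/α^2) * (1 / (((j:ℝ) + K) * ((j:ℝ) + K + 1))) :=
          Summable.tsum_le_tsum hle ((summable_nat_add_iff K).mpr hDsum) hTel.summable
      _ = (1/α^2) * (1/(K:ℝ)) := hTel.tsum_eq
      _ ≤ (1/α^2) * α := mul_le_mul_of_nonneg_left hKinv (by positivity)
      _ = 1/α := by field_simp
  exact le_trans (add_le_add hhead htail) (le_of_eq (by ring))

private lemma my_lower {α : ℝ} (hα : 0 < α) (hα1 : α ≤ 1) :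
    π ^ 2 / (6 * α ^ 2) - 2 / α
      ≤ ∑' m : ℕ, ((m : ℝ) + 1) * Real.exp (-α) ^ (m + 1) / (1 - Real.exp (-α) ^ (m + 1)) := by
  rw [my_sum_eq_S hα]
  have hBsum := (my_hasSum_B hα).summable
  have hGsum := my_summable_G' hα
  have hE := my_E_le_gen (B := fun k : ℕ => 1 / (α * ((k:ℝ) + 1)) ^ 2)
    (G := fun k : ℕ => 1 / (4 * Real.sinh (α * ((k:ℝ) + 1) / 2) ^ 2))
    hα hα1 hBsum hGsum
    (fun k => by positivity)
    (fun k => rfl)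
    (fun k hk => my_head (by positivity) hk)
  rw [Summable.tsum_sub hBsum hGsum, (my_hasSum_B hα).tsum_eq] at hE
  linarith

/-- with `α = -log q`, `∑_{m≥1} m q^m/(1-q^m) = π²/(6α²) + O(1/α)` as `α → 0⁺`;
consequently, if the sum equals `n` then `α = π/√(6n)·(1+o(1))` as `n → ∞`. -/
theorem sum_m_qm_asymptotic :
    ((fun α : ℝ =>
        (∑' m : ℕ, ((m : ℝ) + 1) * exp (-α) ^ (m + 1) / (1 - exp (-α) ^ (m + 1)))
          - π ^ 2 / (6 * α ^ 2)) =O[𝓝[>] (0 : ℝ)] fun α => 1 / α) ∧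
    (∀ α : ℕ → ℝ, (∀ n, 0 < α n) →
      (∀ n : ℕ, (∑' m : ℕ,
          ((m : ℝ) + 1) * exp (-(α n)) ^ (m + 1) / (1 - exp (-(α n)) ^ (m + 1))) = n) →
      Tendsto (fun n : ℕ => α n / (π / Real.sqrt (6 * n))) atTop (𝓝 1)) := by
  constructor
  · refine isBigO_iff.mpr ⟨2, ?_⟩
    filter_upwards [Ioc_mem_nhdsGT_of_mem (Set.mem_Ico.mpr ⟨le_refl (0:ℝ), zero_lt_one⟩)]
      with α hα
    obtain ⟨hα0, hα1⟩ := hα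
    have hu := my_upper hα0
    have hl := my_lower hα0 hα1
    show |(∑' m : ℕ, ((m : ℝ) + 1) * exp (-α) ^ (m + 1) / (1 - exp (-α) ^ (m + 1)))
        - π ^ 2 / (6 * α ^ 2)| ≤ 2 * |1/α|
    rw [abs_of_nonpos (by linarith), abs_of_nonneg (by positivity), neg_sub, mul_one_div]
    linarith
  · intro a ha hsum
    -- upper bound consequences
    have hup : ∀ n : ℕ, (n:ℝ) ≤ π ^ 2 / (6 * (a n) ^ 2) := by
      intro n
      have h := my_upper (ha n)
      rw [hsum n] at h
      exact h
    have hup' : ∀ n : ℕ, (n:ℝ) * (6 * (a n)^2) ≤ π ^ 2 := by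
      intro n
      have h := hup n
      rwa [le_div_iff₀ (by have := ha n; positivity)] at h
    have hsqle : ∀ᶠ n : ℕ in atTop, (a n)^2 ≤ π^2 / (6*(n:ℝ)) := by
      filter_upwards [eventually_ge_atTop 1] with n hn
      have hn' : (1:ℝ) ≤ (n:ℝ) := by exact_mod_cast hn
      rw [le_div_iff₀ (by linarith)]
      nlinarith [hup' n]
    -- a n → 0
    have htop : Tendsto (fun n : ℕ => 6*(n:ℝ)) atTop atTop :=
      (tendsto_natCast_atTop_atTop).const_mul_atTop (by norm_num)
    have hb0 : Tendsto (fun n : ℕ => π^2/(6*(n:ℝ))) atTop (𝓝 0) := by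
      simp only [div_eq_mul_inv]
      have := htop.inv_tendsto_atTop.const_mul (π^2)
      simpa using this
    have hsq0 : Tendsto (fun n : ℕ => (a n)^2) atTop (𝓝 0) :=
      tendsto_of_tendsto_of_tendsto_of_le_of_le' tendsto_const_nhds hb0
        (Eventually.of_forall fun n => sq_nonneg _) hsqle
    have ha0 : Tendsto a atTop (𝓝 0) := by
      have h := hsq0.sqrt
      rw [Real.sqrt_zero] at h
      exact h.congr fun n => Real.sqrt_sq (ha n).le
    -- eventual bounds for s n := 6 n (a n)^2 / π^2
    have hev1 : ∀ᶠ n : ℕ in atTop, a n ≤ 1 :=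
      ha0.eventually_le_const (by norm_num : (0:ℝ) < 1)
    have hπ : (0:ℝ) < π := Real.pi_pos
    have hsupper : ∀ᶠ n : ℕ in atTop, 6*(n:ℝ)*(a n)^2/π^2 ≤ 1 := by
      filter_upwards [] with n
      rw [div_le_one (by positivity)]
      nlinarith [hup' n]
    have hslower : ∀ᶠ n : ℕ in atTop, 1 - (12/π^2) * a n ≤ 6*(n:ℝ)*(a n)^2/π^2 := by
      filter_upwards [hev1] with n h1
      have hl := my_lower (ha n) h1
      rw [hsum n] at hl
      have hae := ha n
      have e1 : (π^2/(6*(a n)^2)) * (a n)^2 = π^2/6 := by field_simp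
      have e2 : (2/(a n)) * (a n)^2 = 2 * a n := by field_simp
      have h2 : π^2/6 - 2 * a n ≤ (n:ℝ) * (a n)^2 := by
        nlinarith [mul_le_mul_of_nonneg_right hl (sq_nonneg (a n))]
      have e3 : (1 - 12/π^2 * a n) * π^2 = π^2 - 12 * a n := by field_simp
      rw [le_div_iff₀ (by positivity : (0:ℝ) < π^2), e3]
      linarith
    have hlowtend : Tendsto (fun n : ℕ => 1 - (12/π^2) * a n) atTop (𝓝 1) := by
      have := tendsto_const_nhds (x := (1:ℝ)) (f := atTop (α := ℕ))
      have h2 := this.sub ((ha0.const_mul (12/π^2)))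
      simpa using h2
    have hs : Tendsto (fun n : ℕ => 6*(n:ℝ)*(a n)^2/π^2) atTop (𝓝 1) :=
      tendsto_of_tendsto_of_tendsto_of_le_of_le' hlowtend tendsto_const_nhds hslower hsupper
    have hsqrt : Tendsto (fun n : ℕ => Real.sqrt (6*(n:ℝ)*(a n)^2/π^2)) atTop (𝓝 1) := by
      have h := hs.sqrt
      rwa [Real.sqrt_one] at h
    refine hsqrt.congr' ?_
    filter_upwards [eventually_ge_atTop 1] with n hn
    have hn' : (1:ℝ) ≤ (n:ℝ) := by exact_mod_cast hn
    have h6n : (0:ℝ) < 6*(n:ℝ) := by linarith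
    have hb2 : (Real.sqrt (6*(n:ℝ)))^2 = 6*(n:ℝ) := Real.sq_sqrt h6n.le
    have he : 6*(n:ℝ)*(a n)^2/π^2 = (Real.sqrt (6*(n:ℝ)) * a n / π)^2 := by
      rw [div_pow, mul_pow, hb2]
    have hnn : 0 ≤ Real.sqrt (6*(n:ℝ)) * a n / π :=
      div_nonneg (mul_nonneg (Real.sqrt_nonneg _) (ha n).le) hπ.le
    rw [he, Real.sqrt_sq hnn, div_div_eq_mul_div]
    ring
end

section
/- (Nash-Williams criterion, as used in the paper) Let λ = (λ₁ ≥ λ₂ ≥ ... ) be a partition of an even integer n, let K be its Durfee square size (the largest k with λ_k ≥ k), and for each k let R_k = λ_k - |{i : λ_i ≥ k}| be the k-th rank. Then λ is graphical (i.e., is the degree sequence of a simple graph) if and only if ∑_{l=1}^{k} R_l ≤ -k for all 1 ≤ k ≤ K. -/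
open scoped BigOperators

/-- The `k`-th largest part of a partition (`k ≥ 1`), i.e. `λ_k`; `0` if there are fewer
than `k` parts. -/
def partOf {n : ℕ} (p : n.Partition) (k : ℕ) : ℕ :=
  (p.parts.sort (· ≥ ·)).getD (k - 1) 0

/-- The `k`-th part of the conjugate partition, `λ'_k = |{i : λ_i ≥ k}|`. -/
def conjPart {n : ℕ} (p : n.Partition) (k : ℕ) : ℕ :=
  (p.parts.filter fun m => k ≤ m).card

/-- The Durfee square size: the largest `k` with `λ_k ≥ k`. -/
noncomputable def durfee {n : ℕ} (p : n.Partition) : ℕ :=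
  sSup {k : ℕ | k ≤ partOf p k}

/-- The `k`-th rank of Atkin, `R_k = λ_k - λ'_k`. -/
def rank {n : ℕ} (p : n.Partition) (k : ℕ) : ℤ :=
  (partOf p k : ℤ) - (conjPart p k : ℤ)

/-- A partition is graphical if its parts are exactly the positive vertex degrees of a
simple graph (zero-degree vertices allowed). -/
def IsGraphical {n : ℕ} (p : n.Partition) : Prop :=
  ∃ (N : ℕ) (G : SimpleGraph (Fin N)),
    (Finset.univ.val.map fun v => Set.ncard {w | G.Adj v w}).filter (fun d => 0 < d)
      = p.parts



open Finset

namespace NWaux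

/-- degree via ncard, matching the problem statement -/
noncomputable def degC {V : Type*} (G : SimpleGraph V) (v : V) : ℕ := Set.ncard {w | G.Adj v w}

lemma degC_bot {V : Type*} (v : V) : degC (⊥ : SimpleGraph V) v = 0 := by
  simp [degC]

lemma degC_eq_card {n : ℕ} (G : SimpleGraph (Fin n)) [DecidableRel G.Adj] (v : Fin n) :
    degC G v = (univ.filter (fun w => G.Adj v w)).card := by
  rw [degC, ← Set.ncard_coe_finset]
  congr 1
  ext w; simp

/-- add an edge between `a` and `b` -/
def addE {n : ℕ} (G : SimpleGraph (Fin n)) (a b : Fin n) : SimpleGraph (Fin n) where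
  Adj u v := u ≠ v ∧ (G.Adj u v ∨ (u = a ∧ v = b) ∨ (u = b ∧ v = a))
  symm := by
    constructor
    rintro u v ⟨h1, h2⟩
    refine ⟨Ne.symm h1, ?_⟩
    rcases h2 with h | ⟨rfl, rfl⟩ | ⟨rfl, rfl⟩
    · exact Or.inl h.symm
    · tauto
    · tauto
  loopless := ⟨fun u h => h.1 rfl⟩

section addE
variable {n : ℕ} (G : SimpleGraph (Fin n)) (a b : Fin n)
  (hab : a ≠ b) (hnadj : ¬ G.Adj a b)

include hab hnadj in
lemma addE_degC_a : degC (addE G a b) a = degC G a + 1 := by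
  have hset : {w | (addE G a b).Adj a w} = insert b {w | G.Adj a w} := by
    ext w
    simp only [addE, Set.mem_setOf_eq, Set.mem_insert_iff]
    constructor
    · rintro ⟨h1, h | ⟨h2, h3⟩ | ⟨h2, h3⟩⟩
      · exact Or.inr h
      · exact Or.inl h3
      · exact absurd h2 hab
    · rintro (rfl | h)
      · exact ⟨hab, by tauto⟩
      · exact ⟨G.ne_of_adj h, Or.inl h⟩
  rw [degC, hset, Set.ncard_insert_of_notMem (by simpa using hnadj) (Set.toFinite _)]
  rfl

include hab hnadj in
lemma addE_degC_b : degC (addE G a b) b = degC G b + 1 := by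
  have hset : {w | (addE G a b).Adj b w} = insert a {w | G.Adj b w} := by
    ext w
    simp only [addE, Set.mem_setOf_eq, Set.mem_insert_iff]
    constructor
    · rintro ⟨h1, h | ⟨h2, h3⟩ | ⟨h2, h3⟩⟩
      · exact Or.inr h
      · exact absurd h2 hab.symm
      · exact Or.inl h3
    · rintro (rfl | h)
      · exact ⟨hab.symm, by tauto⟩
      · exact ⟨G.ne_of_adj h, Or.inl h⟩
  rw [degC, hset, Set.ncard_insert_of_notMem
    (by simp only [Set.mem_setOf_eq]; exact fun h => hnadj h.symm) (Set.toFinite _)]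
  rfl

lemma addE_degC_other (v : Fin n) (hva : v ≠ a) (hvb : v ≠ b) :
    degC (addE G a b) v = degC G v := by
  have hset : {w | (addE G a b).Adj v w} = {w | G.Adj v w} := by
    ext w
    simp only [addE, Set.mem_setOf_eq]
    constructor
    · rintro ⟨h1, h | ⟨h2, h3⟩ | ⟨h2, h3⟩⟩
      · exact h
      · exact absurd h2 hva
      · exact absurd h2 hvb
    · exact fun h => ⟨G.ne_of_adj h, Or.inl h⟩
  rw [degC, hset]; rfl

end addE

end NWaux

namespace NWaux

/-- remove edge `xy`, add edges `ax` and `by` -/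
def swapE {n : ℕ} (G : SimpleGraph (Fin n)) (a b x y : Fin n) : SimpleGraph (Fin n) where
  Adj u v := u ≠ v ∧ ((G.Adj u v ∧ ¬((u = x ∧ v = y) ∨ (u = y ∧ v = x))) ∨
      ((u = a ∧ v = x) ∨ (u = x ∧ v = a) ∨ (u = b ∧ v = y) ∨ (u = y ∧ v = b)))
  symm := by
    constructor
    rintro u v ⟨h1, h2⟩
    refine ⟨Ne.symm h1, ?_⟩
    rcases h2 with ⟨h, h'⟩ | h
    · exact Or.inl ⟨h.symm, by tauto⟩
    · tauto
  loopless := by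
    constructor
    rintro u ⟨h1, _⟩
    exact h1 rfl

section swapE
variable {n : ℕ} {G : SimpleGraph (Fin n)} {a b x y : Fin n}
  (hxy : G.Adj x y) (hax : ¬ G.Adj a x) (hby : ¬ G.Adj b y)
  (hab : a ≠ b) (hax' : a ≠ x) (hay : a ≠ y) (hbx : b ≠ x) (hby' : b ≠ y)

include hxy hax hby hab hax' hay hbx hby'

lemma swapE_degC_a : degC (swapE G a b x y) a = degC G a + 1 := by
  have hset : {w | (swapE G a b x y).Adj a w} = insert x {w | G.Adj a w} := by
    ext w
    simp only [swapE, Set.mem_setOf_eq, Set.mem_insert_iff]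
    constructor
    · rintro ⟨h1, ⟨h, _⟩ | h⟩
      · exact Or.inr h
      · rcases h with ⟨_, rfl⟩ | ⟨h, _⟩ | ⟨h, _⟩ | ⟨h, _⟩ <;> tauto
    · rintro (rfl | h)
      · exact ⟨hax', by tauto⟩
      · exact ⟨G.ne_of_adj h, Or.inl ⟨h, by tauto⟩⟩
  rw [degC, hset, Set.ncard_insert_of_notMem (by simpa using hax) (Set.toFinite _)]
  rfl

lemma swapE_degC_b : degC (swapE G a b x y) b = degC G b + 1 := by
  have hset : {w | (swapE G a b x y).Adj b w} = insert y {w | G.Adj b w} := by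
    ext w
    simp only [swapE, Set.mem_setOf_eq, Set.mem_insert_iff]
    constructor
    · rintro ⟨h1, ⟨h, _⟩ | h⟩
      · exact Or.inr h
      · rcases h with ⟨h, _⟩ | ⟨h, _⟩ | ⟨_, rfl⟩ | ⟨h, _⟩ <;> tauto
    · rintro (rfl | h)
      · exact ⟨hby', by tauto⟩
      · exact ⟨G.ne_of_adj h, Or.inl ⟨h, by tauto⟩⟩
  rw [degC, hset, Set.ncard_insert_of_notMem (by simpa using hby) (Set.toFinite _)]
  rfl

lemma swapE_degC_x : degC (swapE G a b x y) x = degC G x := by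
  have hne : x ≠ y := G.ne_of_adj hxy
  have hset : {w | (swapE G a b x y).Adj x w} = insert a ({w | G.Adj x w} \ {y}) := by
    ext w
    simp only [swapE, Set.mem_setOf_eq, Set.mem_insert_iff, Set.mem_diff,
      Set.mem_singleton_iff]
    constructor
    · rintro ⟨h1, ⟨h, h2⟩ | h⟩
      · refine Or.inr ⟨h, fun hw => h2 ?_⟩
        subst hw; tauto
      · rcases h with ⟨h, _⟩ | ⟨_, rfl⟩ | ⟨h, _⟩ | ⟨h, _⟩ <;> tauto
    · rintro (rfl | ⟨h, h2⟩)
      · exact ⟨fun h => hax' h.symm, by tauto⟩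
      · exact ⟨G.ne_of_adj h, Or.inl ⟨h, by tauto⟩⟩
  have hyx : y ∈ {w | G.Adj x w} := hxy
  have hamem : a ∉ {w | G.Adj x w} \ {y} := by
    intro ⟨h, _⟩
    exact hax (h.symm)
  rw [degC, hset, Set.ncard_insert_of_notMem hamem (Set.toFinite _), degC,
    ← Set.ncard_diff_singleton_add_one hyx (Set.toFinite _)]

lemma swapE_degC_y : degC (swapE G a b x y) y = degC G y := by
  have hne : x ≠ y := G.ne_of_adj hxy
  have hset : {w | (swapE G a b x y).Adj y w} = insert b ({w | G.Adj y w} \ {x}) := by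
    ext w
    simp only [swapE, Set.mem_setOf_eq, Set.mem_insert_iff, Set.mem_diff,
      Set.mem_singleton_iff]
    constructor
    · rintro ⟨h1, ⟨h, h2⟩ | h⟩
      · refine Or.inr ⟨h, fun hw => h2 ?_⟩
        subst hw; tauto
      · rcases h with ⟨h, _⟩ | ⟨h, _⟩ | ⟨h, _⟩ | ⟨_, rfl⟩ <;> tauto
    · rintro (rfl | ⟨h, h2⟩)
      · exact ⟨fun h => hby' h.symm, by tauto⟩
      · exact ⟨G.ne_of_adj h, Or.inl ⟨h, by tauto⟩⟩
  have hyx : x ∈ {w | G.Adj y w} := hxy.symm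
  have hbmem : b ∉ {w | G.Adj y w} \ {x} := by
    intro ⟨h, _⟩
    exact hby (h.symm)
  rw [degC, hset, Set.ncard_insert_of_notMem hbmem (Set.toFinite _), degC,
    ← Set.ncard_diff_singleton_add_one hyx (Set.toFinite _)]

lemma swapE_degC_other (v : Fin n) (hva : v ≠ a) (hvb : v ≠ b) (hvx : v ≠ x) (hvy : v ≠ y) :
    degC (swapE G a b x y) v = degC G v := by
  have hset : {w | (swapE G a b x y).Adj v w} = {w | G.Adj v w} := by
    ext w
    simp only [swapE, Set.mem_setOf_eq]
    constructor
    · rintro ⟨h1, ⟨h, _⟩ | h⟩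
      · exact h
      · rcases h with ⟨h, _⟩ | ⟨h, _⟩ | ⟨h, _⟩ | ⟨h, _⟩ <;> tauto
    · intro h
      refine ⟨G.ne_of_adj h, Or.inl ⟨h, ?_⟩⟩
      rintro (⟨rfl, _⟩ | ⟨rfl, _⟩) <;> tauto
  rw [degC, hset]; rfl

end swapE
end NWaux

namespace NWaux
open Finset

lemma filter_split {n : ℕ} (P : Fin n → Prop) [DecidablePred P] (U : Finset (Fin n)) :
    (univ.filter P).card = (U.filter P).card + (Uᶜ.filter P).card := by
  rw [← card_union_of_disjoint]
  · congr 1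
    rw [← filter_union, union_compl]
  · exact disjoint_filter_filter (disjoint_compl_right)

lemma sum_deg_le {n : ℕ} (G : SimpleGraph (Fin n)) [DecidableRel G.Adj] (U : Finset (Fin n)) :
    ∑ v ∈ U, degC G v ≤ U.card * (U.card - 1) + ∑ v ∈ Uᶜ, min U.card (degC G v) := by
  have hdeg : ∀ v, degC G v = (U.filter (fun w => G.Adj v w)).card
      + (Uᶜ.filter (fun w => G.Adj v w)).card := by
    intro v
    rw [degC_eq_card]
    exact filter_split _ U
  calc ∑ v ∈ U, degC G v
      = ∑ v ∈ U, (U.filter (fun w => G.Adj v w)).card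
        + ∑ v ∈ U, (Uᶜ.filter (fun w => G.Adj v w)).card := by
        rw [← sum_add_distrib]; exact Finset.sum_congr rfl (fun v _ => hdeg v)
    _ ≤ U.card * (U.card - 1) + ∑ v ∈ Uᶜ, min U.card (degC G v) := by
        gcongr with v hv w hw
        · calc ∑ v ∈ U, (U.filter (fun w => G.Adj v w)).card
              ≤ ∑ v ∈ U, (U.card - 1) := by
                refine Finset.sum_le_sum (fun v hv => ?_)
                have : U.filter (fun w => G.Adj v w) ⊆ U.erase v := by
                  intro w hw
                  simp only [mem_filter] at hw
                  exact mem_erase.2 ⟨(G.ne_of_adj hw.2).symm, hw.1⟩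
                calc (U.filter (fun w => G.Adj v w)).card ≤ (U.erase v).card :=
                      card_le_card this
                  _ ≤ U.card - 1 := by rw [card_erase_of_mem hv]
            _ ≤ U.card * (U.card - 1) := by rw [Finset.sum_const, smul_eq_mul]
        · calc ∑ v ∈ U, (Uᶜ.filter (fun w => G.Adj v w)).card
              = ∑ v ∈ U, ∑ w ∈ Uᶜ, (if G.Adj v w then 1 else 0) := by
                refine Finset.sum_congr rfl (fun v _ => ?_)
                rw [Finset.card_filter]
            _ = ∑ w ∈ Uᶜ, ∑ v ∈ U, (if G.Adj v w then 1 else 0) := Finset.sum_comm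
            _ = ∑ w ∈ Uᶜ, (U.filter (fun v => G.Adj w v)).card := by
                refine Finset.sum_congr rfl (fun w _ => ?_)
                rw [Finset.card_filter]
                refine Finset.sum_congr rfl (fun v _ => ?_)
                simp only [G.adj_comm v w]
            _ ≤ ∑ w ∈ Uᶜ, min U.card (degC G w) := by
                refine Finset.sum_le_sum (fun w _ => ?_)
                refine le_min (card_le_card (filter_subset _ _)) ?_
                rw [degC_eq_card]
                exact card_le_card (fun v hv => by
                  simp only [mem_filter] at hv ⊢
                  exact ⟨mem_univ _, hv.2⟩)

end NWaux

namespace NWaux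
open Finset

def Lsum (d : ℕ → ℕ) (k : ℕ) : ℕ := ∑ j ∈ Finset.range k, d j

def Msum (n : ℕ) (d : ℕ → ℕ) (k : ℕ) : ℕ := ∑ j ∈ Finset.Ico k n, min k (d j)

def EGseq (n : ℕ) (d : ℕ → ℕ) : Prop :=
  ∀ k, 1 ≤ k → Lsum d k ≤ k * (k - 1) + Msum n d k

/-- decrement `d` at two positions -/
def red (d : ℕ → ℕ) (a0 b0 : ℕ) : ℕ → ℕ :=
  fun j => if j = a0 ∨ j = b0 then d j - 1 else d j

section red
variable {d : ℕ → ℕ} {a0 b0 n : ℕ}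

lemma red_point (hab : a0 ≠ b0) (ha1 : 1 ≤ d a0) (hb1 : 1 ≤ d b0) (j : ℕ) :
    d j = red d a0 b0 j + (if j = a0 then 1 else 0) + (if j = b0 then 1 else 0) := by
  rcases eq_or_ne j a0 with rfl | hja
  · simp [red, hab] <;> omega
  · rcases eq_or_ne j b0 with rfl | hjb
    · simp [red, hja] <;> omega
    · simp [red, hja, hjb] <;> omega

lemma red_Lsum (hab : a0 ≠ b0) (ha1 : 1 ≤ d a0) (hb1 : 1 ≤ d b0) (k : ℕ) :
    Lsum d k = Lsum (red d a0 b0) k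
      + (if a0 < k then 1 else 0) + (if b0 < k then 1 else 0) := by
  unfold Lsum
  calc ∑ j ∈ Finset.range k, d j
      = ∑ j ∈ Finset.range k, (red d a0 b0 j
          + (if j = a0 then 1 else 0) + (if j = b0 then 1 else 0)) :=
        Finset.sum_congr rfl (fun j _ => red_point hab ha1 hb1 j)
    _ = _ := by
        rw [Finset.sum_add_distrib, Finset.sum_add_distrib]
        have h1 : (∑ j ∈ Finset.range k, if j = a0 then 1 else 0)
            = (if a0 < k then 1 else 0) := by
          simp only [Finset.sum_ite_eq', Finset.mem_range]
        have h2 : (∑ j ∈ Finset.range k, if j = b0 then 1 else 0)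
            = (if b0 < k then 1 else 0) := by
          simp only [Finset.sum_ite_eq', Finset.mem_range]
        rw [h1, h2]

lemma red_Msum (hab : a0 ≠ b0) (ha1 : 1 ≤ d a0) (hb1 : 1 ≤ d b0)
    (han : a0 < n) (hbn : b0 < n) (k : ℕ) :
    Msum n d k ≤ Msum n (red d a0 b0) k
      + (if k ≤ a0 then 1 else 0) + (if k ≤ b0 then 1 else 0) := by
  unfold Msum
  calc ∑ j ∈ Finset.Ico k n, min k (d j)
      ≤ ∑ j ∈ Finset.Ico k n, (min k (red d a0 b0 j)
          + (if j = a0 then 1 else 0) + (if j = b0 then 1 else 0)) := by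
        refine Finset.sum_le_sum (fun j _ => ?_)
        have hp := red_point hab ha1 hb1 j
        rcases eq_or_ne j a0 with hja | hja
        · simp only [if_pos hja, if_neg (hja ▸ hab)] at hp ⊢
          omega
        · rcases eq_or_ne j b0 with hjb | hjb
          · simp only [if_pos hjb, if_neg hja] at hp ⊢
            omega
          · simp only [if_neg hja, if_neg hjb] at hp ⊢
            omega
    _ ≤ _ := by
        rw [Finset.sum_add_distrib, Finset.sum_add_distrib]
        have h1 : (∑ j ∈ Finset.Ico k n, if j = a0 then 1 else 0)
            = (if k ≤ a0 then 1 else 0) := by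
          simp only [Finset.sum_ite_eq', Finset.mem_Ico]
          split_ifs <;> omega
        have h2 : (∑ j ∈ Finset.Ico k n, if j = b0 then 1 else 0)
            = (if k ≤ b0 then 1 else 0) := by
          simp only [Finset.sum_ite_eq', Finset.mem_Ico]
          split_ifs <;> omega
        rw [h1, h2]

lemma red_zero (hz : ∀ j, n ≤ j → d j = 0) : ∀ j, n ≤ j → red d a0 b0 j = 0 := by
  intro j hj
  unfold red
  split_ifs <;> simp [hz j hj]

end red

/-- upward step for EG inequalities -/
lemma EG_step {n : ℕ} {d : ℕ → ℕ} (hz : ∀ j, n ≤ j → d j = 0) {k : ℕ}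
    (hdk : d k ≤ k) (h : Lsum d k ≤ k * (k - 1) + Msum n d k) :
    Lsum d (k + 1) ≤ (k + 1) * k + Msum n d (k + 1) := by
  have hL : Lsum d (k+1) = Lsum d k + d k := Finset.sum_range_succ d k
  rcases le_or_gt n k with hn | hn
  · have hM : Msum n d k = 0 := by
      unfold Msum
      rw [Finset.Ico_eq_empty (by omega)]
      rfl
    have : d k = 0 := hz k hn
    have hkk : k * (k-1) ≤ (k+1) * k := Nat.mul_le_mul (by omega) (by omega)
    omega
  · have hsplit : Msum n d k = min k (d k) + ∑ j ∈ Finset.Ico (k+1) n, min k (d j) := by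
      unfold Msum
      exact Finset.sum_eq_sum_Ico_succ_bot hn _
    have hmono : ∑ j ∈ Finset.Ico (k+1) n, min k (d j) ≤ Msum n d (k+1) := by
      unfold Msum
      exact Finset.sum_le_sum (fun j _ => by omega)
    have hmin : min k (d k) ≤ k := min_le_left _ _
    have hkk : k * (k-1) + 2 * k = (k+1) * k := by
      cases k with
      | zero => rfl
      | succ m =>
        simp only [Nat.succ_sub_one]
        ring
    omega

end NWaux

namespace NWaux
open Finset

lemma Lsum_block {d : ℕ → ℕ} {c m : ℕ} (h : ∀ j, j < m → d j = c) :
    Lsum d m = m * c := by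
  unfold Lsum
  rw [Finset.sum_congr rfl (fun j hj => h j (Finset.mem_range.1 hj))]
  simp [mul_comm]

lemma Lsum_cut {d : ℕ → ℕ} {p n : ℕ} (hpn : p ≤ n) (hz : ∀ j, p ≤ j → d j = 0) :
    Lsum d n = Lsum d p := by
  unfold Lsum
  rw [Finset.range_eq_Ico, ← Finset.sum_Ico_consecutive _ (Nat.zero_le p) hpn]
  rw [← Finset.range_eq_Ico]
  have : ∑ j ∈ Finset.Ico p n, d j = 0 :=
    Finset.sum_eq_zero (fun j hj => hz j (Finset.mem_Ico.1 hj).1)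
  omega

lemma Msum_cutL {d : ℕ → ℕ} {k t n : ℕ} (hkt : k ≤ t) (htn : t ≤ n) :
    Msum n d k = (∑ j ∈ Finset.Ico k t, min k (d j)) + ∑ j ∈ Finset.Ico t n, min k (d j) := by
  unfold Msum
  rw [← Finset.sum_Ico_consecutive _ hkt htn]

lemma EG_pres {n : ℕ} {d : ℕ → ℕ} {c p t : ℕ}
    (hmono : Antitone d)
    (hEG : EGseq n d)
    (heven : Even (Lsum d n))
    (hpz : ∀ j, p ≤ j → d j = 0)
    (hpp : ∀ j, j < p → 1 ≤ d j)
    (hpn : p ≤ n)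
    (hblock : ∀ j, j < t → d j = c)
    (htc : d t < c)
    (htp : t ≤ p)
    (h1t : 1 ≤ t)
    (hcp : c + 1 ≤ p) :
    EGseq n (red d (if t < p then t - 1 else p - 2) (p - 1)) := by
  set a0 := (if t < p then t - 1 else p - 2) with ha0def
  set b0 := p - 1 with hb0def
  have hc1 : 1 ≤ c := lt_of_lt_of_le (by omega : 0 < 1) (by
    have := hpp 0 (by omega)
    have h0 : d 0 = c := hblock 0 h1t
    omega)
  have hp2 : 2 ≤ p := by omega
  have ha0t : a0 < t := by
    rw [ha0def]
    split_ifs with h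
    · omega
    · have : t = p := by omega
      omega
  have hda0 : d a0 = c := hblock a0 ha0t
  have ha0b0 : a0 < b0 := by
    rw [ha0def, hb0def]
    split_ifs with h <;> omega
  have hab : a0 ≠ b0 := Nat.ne_of_lt ha0b0
  have hb0p : b0 < p := by omega
  have hdb0 : 1 ≤ d b0 := hpp b0 hb0p
  have hb0n : b0 < n := by omega
  have ha0n : a0 < n := by omega
  have ha1 : 1 ≤ d a0 := by omega
  intro k hk
  have hLk := red_Lsum hab ha1 hdb0 (d := d) k
  have hMk := red_Msum hab ha1 hdb0 ha0n hb0n (n := n) (d := d) k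
  have hEGk := hEG k hk
  rcases le_or_gt k a0 with hka | hka
  · -- k ≤ a0 : the hard case
    have hkt : k < t := by omega
    have hib1 : (if a0 < k then 1 else 0) = 0 := by rw [if_neg]; omega
    have hib2 : (if b0 < k then 1 else 0) = 0 := by rw [if_neg]; omega
    have hLL : Lsum (red d a0 b0) k = Lsum d k := by omega
    have hLc : Lsum d k = k * c := Lsum_block (fun j hj => hblock j (by omega))
    rcases lt_trichotomy c k with hck | hck | hck
    · -- c < k : trivial
      have h1 : k * c ≤ k * (k - 1) := Nat.mul_le_mul_left _ (by omega)
      omega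
    · -- c = k : need Msum (red) ≥ k
      subst hck
      have hgoal : c ≤ Msum n (red d a0 b0) c → Lsum (red d a0 b0) c
          ≤ c * (c - 1) + Msum n (red d a0 b0) c := by
        have : c * (c-1) + c = c * c := by
          cases c with
          | zero => omega
          | succ v => rw [Nat.succ_sub_one]; ring
        omega
      apply hgoal
      rcases lt_or_ge t p with htlt | htge
      · -- t < p, a0 = t - 1
        have ha0eq : a0 = t - 1 := by rw [ha0def, if_pos htlt]
        rcases Nat.lt_or_ge (t - 1) (c + 1) with ht1 | ht1
        · -- t = k + 1  (t - 1 = k = c since k ≤ a0 = t-1)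
          have htk : t = c + 1 := by omega
          have ha0c : a0 = c := by omega
          -- M' ≥ term at a0 + term at t
          have hsub : ({a0, t} : Finset ℕ) ⊆ Finset.Ico c n := by
            intro j hj
            simp only [Finset.mem_insert, Finset.mem_singleton] at hj
            rcases hj with rfl | rfl <;> (rw [Finset.mem_Ico]; omega)
          have hpair : ∑ j ∈ ({a0, t} : Finset ℕ), min c (red d a0 b0 j)
              ≤ Msum n (red d a0 b0) c :=
            Finset.sum_le_sum_of_subset hsub
          rw [Finset.sum_pair (by omega : a0 ≠ t)] at hpair
          have hterm1 : min c (red d a0 b0 a0) = c - 1 := by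
            unfold red
            rw [if_pos (Or.inl rfl)]
            omega
          rcases Nat.lt_or_ge (t + 1) p with hp2' | hp2'
          · -- p ≥ t + 2 : t ∉ {a0, b0}, d t ≥ 1
            have hterm2 : 1 ≤ min c (red d a0 b0 t) := by
              unfold red
              rw [if_neg (by omega : ¬(t = a0 ∨ t = b0))]
              have := hpp t (by omega)
              omega
            omega
          · -- p = t + 1 : t = b0
            have hpt : p = t + 1 := by omega
            have htb0 : t = b0 := by omega
            rcases Nat.lt_or_ge (d t) 2 with hdt | hdt
            · -- d t = 1 : parity contradiction
              exfalso
              have hdt1 : d t = 1 := by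
                have := hpp t (by omega)
                omega
              have hS : Lsum d n = Lsum d p := Lsum_cut hpn hpz
              have hSp : Lsum d p = Lsum d t + d t := by
                rw [hpt]
                exact Finset.sum_range_succ d t
              have hLt : Lsum d t = t * c := Lsum_block (fun j hj => hblock j hj)
              have hqe : Even (c * (c + 1)) := Nat.even_mul_succ_self c
              rcases heven with ⟨m, hm⟩
              rcases hqe with ⟨q, hq⟩
              have htc' : t * c = c * (c + 1) := by rw [htk]; ring
              omega
            · -- d t ≥ 2
              have hterm2 : 1 ≤ min c (red d a0 b0 t) := by
                unfold red
                rw [if_pos (Or.inr htb0)]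
                omega
              omega
        · -- t ≥ k + 2 : first region alone suffices
          have hsub : Finset.Ico c (t-1) ⊆ Finset.Ico c n := by
            apply Finset.Ico_subset_Ico le_rfl
            omega
          have hbound : ∑ j ∈ Finset.Ico c (t-1), min c (red d a0 b0 j)
              ≤ Msum n (red d a0 b0) c := Finset.sum_le_sum_of_subset hsub
          have hconst : ∑ j ∈ Finset.Ico c (t-1), min c (red d a0 b0 j)
              = (t - 1 - c) * c := by
            rw [Finset.sum_congr rfl (fun j hj => ?_), Finset.sum_const,
              Nat.card_Ico, smul_eq_mul]
            rw [Finset.mem_Ico] at hj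
            unfold red
            rw [if_neg (by omega : ¬(j = a0 ∨ j = b0))]
            rw [hblock j (by omega)]
            omega
          have : 1 * c ≤ (t - 1 - c) * c := Nat.mul_le_mul_right _ (by omega)
          omega
      · -- t = p : all positive entries equal c
        have htep : t = p := by omega
        have ha0eq : a0 = p - 2 := by rw [ha0def, if_neg (by omega)]
        rcases Nat.lt_or_ge c 2 with hc2 | hc2
        · -- c = 1 : parity forces p ≥ 4
          have hc1' : c = 1 := by omega
          have hS : Lsum d n = Lsum d p := Lsum_cut hpn hpz
          have hLt : Lsum d p = p * c := Lsum_block (fun j hj => hblock j (by omega))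
          have hpeven : Even p := by
            rcases heven with ⟨m, hm⟩
            refine ⟨m, ?_⟩
            have : p * c = p := by rw [hc1']; ring
            omega
          have hp4 : 4 ≤ p := by
            rcases hpeven with ⟨m, hm⟩
            omega
          have hsub : Finset.Ico c (p-2) ⊆ Finset.Ico c n := by
            apply Finset.Ico_subset_Ico le_rfl
            omega
          have hbound : ∑ j ∈ Finset.Ico c (p-2), min c (red d a0 b0 j)
              ≤ Msum n (red d a0 b0) c := Finset.sum_le_sum_of_subset hsub
          have hconst : ∑ j ∈ Finset.Ico c (p-2), min c (red d a0 b0 j)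
              = (p - 2 - c) * c := by
            rw [Finset.sum_congr rfl (fun j hj => ?_), Finset.sum_const,
              Nat.card_Ico, smul_eq_mul]
            rw [Finset.mem_Ico] at hj
            unfold red
            rw [if_neg (by omega : ¬(j = a0 ∨ j = b0))]
            rw [hblock j (by omega)]
            omega
          have : 1 * c ≤ (p - 2 - c) * c := Nat.mul_le_mul_right _ (by omega)
          omega
        · -- c ≥ 2 : sum of (c-1) over Ico c p works
          have hsub : Finset.Ico c p ⊆ Finset.Ico c n := by
            apply Finset.Ico_subset_Ico le_rfl
            omega
          have hbound : ∑ j ∈ Finset.Ico c p, min c (red d a0 b0 j)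
              ≤ Msum n (red d a0 b0) c := Finset.sum_le_sum_of_subset hsub
          have hconst : ∑ j ∈ Finset.Ico c p, (c - 1)
              ≤ ∑ j ∈ Finset.Ico c p, min c (red d a0 b0 j) := by
            refine Finset.sum_le_sum (fun j hj => ?_)
            rw [Finset.mem_Ico] at hj
            have hdj : d j = c := hblock j (by omega)
            unfold red
            split_ifs <;> omega
          rw [Finset.sum_const, Nat.card_Ico, smul_eq_mul] at hconst
          have h2 : 2 * (c - 1) ≤ (p - c) * (c - 1) := Nat.mul_le_mul_right _ (by omega)
          omega
    · -- c ≥ k + 1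
      rcases Nat.lt_or_ge k (d b0) with hdb | hdb
      · -- d b0 ≥ k + 1 : M and L unchanged
        have hMeq : Msum n (red d a0 b0) k = Msum n d k := by
          unfold Msum
          refine Finset.sum_congr rfl (fun j hj => ?_)
          rw [Finset.mem_Ico] at hj
          unfold red
          rcases eq_or_ne j a0 with rfl | hja
          · rw [if_pos (Or.inl rfl)]
            omega
          · rcases eq_or_ne j b0 with rfl | hjb
            · rw [if_pos (Or.inr rfl)]
              omega
            · rw [if_neg (by tauto)]
        omega
      · -- the corner : d b0 ≤ k, c ≥ k + 1
        have htlt : t < p := by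
          by_contra hcon
          have : t = p := by omega
          have : d b0 = c := hblock b0 (by omega)
          omega
        have ha0eq : a0 = t - 1 := by rw [ha0def, if_pos htlt]
        set r := ((Finset.Ico t n).filter (fun j => k + 1 ≤ d j)).card with hrdef
        set T := ∑ j ∈ (Finset.Ico t n).filter (fun j => ¬ (k + 1 ≤ d j)), d j with hTdef
        -- f1 : Msum n d k = (t-k)*k + (k*r + T)
        have hf1 : Msum n d k = (t - k) * k + (k * r + T) := by
          rw [Msum_cutL (by omega : k ≤ t) (by omega : t ≤ n)]
          congr 1
          · rw [Finset.sum_congr rfl (fun j hj => ?_), Finset.sum_const,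
              Nat.card_Ico, smul_eq_mul]
            rw [Finset.mem_Ico] at hj
            rw [hblock j (by omega)]
            omega
          · rw [← Finset.sum_filter_add_sum_filter_not (Finset.Ico t n)
              (fun j => k + 1 ≤ d j)]
            congr 1
            · rw [Finset.sum_congr rfl (fun j hj => ?_), Finset.sum_const, smul_eq_mul,
                mul_comm]
              rw [Finset.mem_filter] at hj
              omega
            · refine Finset.sum_congr rfl (fun j hj => ?_)
              rw [Finset.mem_filter] at hj
              omega
        -- f2 : d b0 ≤ T
        have hf2 : d b0 ≤ T := by
          rw [hTdef]
          refine Finset.single_le_sum (f := fun j => d j) (fun j _ => Nat.zero_le _) ?_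
          rw [Finset.mem_filter, Finset.mem_Ico]
          omega
        -- f3 : Msum n d (k+1) + k = Msum n d k + ((t - (k+1)) + r)
        have hf3 : Msum n d (k + 1) + k = Msum n d k + ((t - (k + 1)) + r) := by
          have hsplitk : Msum n d k = min k (d k) + ∑ j ∈ Finset.Ico (k+1) n, min k (d j) := by
            unfold Msum
            exact Finset.sum_eq_sum_Ico_succ_bot (by omega) _
          have hdk : d k = c := hblock k hkt
          have hmindk : min k (d k) = k := by omega
          have hpoint : ∀ j, min (k+1) (d j) = min k (d j) + (if k + 1 ≤ d j then 1 else 0) := by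
            intro j
            split_ifs <;> omega
          have hM1 : Msum n d (k+1) = (∑ j ∈ Finset.Ico (k+1) n, min k (d j))
              + ((Finset.Ico (k+1) n).filter (fun j => k + 1 ≤ d j)).card := by
            unfold Msum
            rw [Finset.sum_congr rfl (fun j _ => hpoint j), Finset.sum_add_distrib]
            congr 1
            rw [Finset.card_filter]
          have hQ : ((Finset.Ico (k+1) n).filter (fun j => k + 1 ≤ d j)).card
              = (t - (k+1)) + r := by
            rw [Finset.card_filter, ← Finset.sum_Ico_consecutive _
              (show k + 1 ≤ t by omega) (show t ≤ n by omega)]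
            have h1 : ∑ j ∈ Finset.Ico (k+1) t, (if k + 1 ≤ d j then 1 else 0)
                = t - (k+1) := by
              rw [Finset.sum_congr rfl (fun j hj => ?_), Finset.sum_const,
                Nat.card_Ico, smul_eq_mul, mul_one]
              rw [Finset.mem_Ico] at hj
              rw [if_pos (by rw [hblock j (by omega)]; omega)]
            have h2 : ∑ j ∈ Finset.Ico t n, (if k + 1 ≤ d j then 1 else 0) = r := by
              rw [hrdef, Finset.card_filter]
            omega
          omega
        -- L at k and k+1
        have hLc1 : Lsum d (k+1) = (k+1) * c := Lsum_block (fun j hj => hblock j (by omega))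
        have hEGk1 := hEG (k+1) (by omega)
        -- M' ≥ M - 1
        have hM'b : Msum n d k ≤ Msum n (red d a0 b0) k + 1 := by
          unfold Msum
          have hpt : ∀ j ∈ Finset.Ico k n, min k (d j)
              ≤ min k (red d a0 b0 j) + (if j = b0 then 1 else 0) := by
            intro j hj
            unfold red
            rcases eq_or_ne j a0 with rfl | hja
            · rw [if_pos (Or.inl rfl), if_neg hab]
              omega
            · rcases eq_or_ne j b0 with rfl | hjb
              · rw [if_pos (Or.inr rfl), if_pos rfl]
                omega
              · rw [if_neg (by tauto), if_neg hjb]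
                omega
          calc ∑ j ∈ Finset.Ico k n, min k (d j)
              ≤ ∑ j ∈ Finset.Ico k n, (min k (red d a0 b0 j)
                  + (if j = b0 then 1 else 0)) := Finset.sum_le_sum hpt
            _ ≤ _ := by
                rw [Finset.sum_add_distrib]
                have : (∑ j ∈ Finset.Ico k n, if j = b0 then 1 else 0) ≤ 1 := by
                  simp only [Finset.sum_ite_eq', Finset.mem_Ico]
                  split_ifs <;> omega
                omega
        -- two branches
        have hmul1 : (k+1) * c = k * c + c := by ring
        have hmul2 : (k+1) * k = k * k + k := by ring
        have hmul4 : (k+1) * (k + 1 - 1) = (k+1) * k := rfl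
        have hmul3 : k * (k - 1) + k = k * k := by
          cases k with
          | zero => omega
          | succ v => rw [Nat.succ_sub_one]; ring
        rcases Nat.lt_or_ge c (t + r) with hbr | hbr
        · -- t + r ≥ c + 1
          have hre : (k - 1) + (t - k) + r = (t - 1) + r := by omega
          have hexp : k * ((t-1) + r) = k * (k-1) + k * (t-k) + k * r := by
            rw [← hre, Nat.mul_add, Nat.mul_add]
          have hmulle : k * c ≤ k * ((t-1) + r) := Nat.mul_le_mul_left _ (by omega)
          have hcomm : (t - k) * k = k * (t - k) := Nat.mul_comm _ _
          omega
        · -- t + r ≤ c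
          omega
  · -- a0 < k : easy cases
    have hib1 : (if a0 < k then 1 else 0) = 1 := by rw [if_pos hka]
    have hia1 : (if k ≤ a0 then 1 else 0) = 0 := by rw [if_neg]; omega
    rcases le_or_gt p k with hpk | hkp
    · have hib2 : (if b0 < k then 1 else 0) = 1 := by rw [if_pos]; omega
      have hia2 : (if k ≤ b0 then 1 else 0) = 0 := by rw [if_neg]; omega
      omega
    · have hib2 : (if b0 < k then 1 else 0) = 0 := by rw [if_neg]; omega
      have hia2 : (if k ≤ b0 then 1 else 0) = 1 := by rw [if_pos]; omega
      omega

end NWaux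

namespace NWaux
open Finset

theorem EG_sufficient : ∀ S n (d : ℕ → ℕ), Antitone d → (∀ j, n ≤ j → d j = 0) →
    Lsum d n = S → Even S → EGseq n d →
    ∃ G : SimpleGraph (Fin n), ∀ v : Fin n, degC G v = d v.1 := by
  intro S
  induction S using Nat.strong_induction_on with
  | _ S IH =>
  intro n d hmono hz hsum heven hEG
  rcases Nat.eq_zero_or_pos S with rfl | hS
  · refine ⟨⊥, fun v => ?_⟩
    rw [degC_bot]
    have hall := (Finset.sum_eq_zero_iff.1 hsum) v.1 (Finset.mem_range.2 v.2)
    omega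
  · have hn1 : 1 ≤ n := by
      by_contra hn
      have : n = 0 := by omega
      subst this
      simp [Lsum] at hsum
      omega
    have hd0 : 1 ≤ d 0 := by
      by_contra hd
      have hall : ∀ j, d j = 0 := fun j => by
        have := hmono (Nat.zero_le j)
        omega
      have : Lsum d n = 0 := Finset.sum_eq_zero (fun j _ => hall j)
      omega
    set c := d 0 with hcdef
    have hpne : ∃ j, d j = 0 := ⟨n, hz n le_rfl⟩
    set p := sInf {j | d j = 0} with hpdef
    have hp_mem : d p = 0 := Nat.sInf_mem hpne
    have hpp : ∀ j, j < p → 1 ≤ d j := by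
      intro j hj
      have := Nat.notMem_of_lt_sInf (s := {j | d j = 0}) hj
      simp only [Set.mem_setOf_eq] at this
      omega
    have hpn : p ≤ n := Nat.sInf_le (hz n le_rfl)
    have hppos : 1 ≤ p := by
      by_contra h
      have : p = 0 := by omega
      rw [this] at hp_mem
      omega
    have hpz : ∀ j, p ≤ j → d j = 0 := fun j hj => by
      have := hmono hj
      omega
    have htne : ∃ j, d j < c := ⟨p, by omega⟩
    set t := sInf {j | d j < c} with htdef
    have htc : d t < c := Nat.sInf_mem htne
    have hblock : ∀ j, j < t → d j = c := by
      intro j hj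
      have h1 := Nat.notMem_of_lt_sInf (s := {j | d j < c}) hj
      simp only [Set.mem_setOf_eq] at h1
      have h2 := hmono (Nat.zero_le j)
      omega
    have h1t : 1 ≤ t := by
      by_contra h
      have : t = 0 := by omega
      rw [this] at htc
      omega
    have htp : t ≤ p := Nat.sInf_le (by simp only [Set.mem_setOf_eq]; omega)
    -- EG(1) gives c + 1 ≤ p
    have hcp : c + 1 ≤ p := by
      have hM1 : Msum n d 1 = p - 1 := by
        rw [Msum_cutL hppos hpn]
        have h1 : ∑ j ∈ Finset.Ico 1 p, min 1 (d j) = p - 1 := by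
          rw [Finset.sum_congr rfl (fun j hj => ?_), Finset.sum_const,
            Nat.card_Ico, smul_eq_mul, mul_one]
          rw [Finset.mem_Ico] at hj
          have := hpp j hj.2
          omega
        have h2 : ∑ j ∈ Finset.Ico p n, min 1 (d j) = 0 :=
          Finset.sum_eq_zero (fun j hj => by
            rw [Finset.mem_Ico] at hj
            rw [hpz j hj.1]
            omega)
        omega
      have hL1 : Lsum d 1 = c := by
        unfold Lsum
        rw [Finset.sum_range_one]
      have := hEG 1 le_rfl
      omega
    have hp2 : 2 ≤ p := by omega
    set a0 := (if t < p then t - 1 else p - 2) with ha0def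
    set b0 := p - 1 with hb0def
    have ha0t : a0 < t := by
      rw [ha0def]
      split_ifs with h
      · omega
      · omega
    have hda0 : d a0 = c := hblock a0 ha0t
    have ha0b0 : a0 < b0 := by
      rw [ha0def, hb0def]
      split_ifs with h <;> omega
    have hab : a0 ≠ b0 := Nat.ne_of_lt ha0b0
    have hb0p : b0 < p := by omega
    have hdb0 : 1 ≤ d b0 := hpp b0 hb0p
    have hb0n : b0 < n := by omega
    have ha0n : a0 < n := by omega
    have ha1 : 1 ≤ d a0 := by omega
    set D := red d a0 b0 with hDdef
    have hDa0 : D a0 = d a0 - 1 := by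
      rw [hDdef]
      unfold red
      rw [if_pos (Or.inl rfl)]
    have hDb0 : D b0 = d b0 - 1 := by
      rw [hDdef]
      unfold red
      rw [if_pos (Or.inr rfl)]
    have hDother : ∀ j, j ≠ a0 → j ≠ b0 → D j = d j := by
      intro j h1 h2
      rw [hDdef]
      unfold red
      rw [if_neg (by tauto)]
    -- D is antitone
    have hmonoD : Antitone D := by
      intro i j hij
      rcases eq_or_lt_of_le hij with rfl | hij
      · exact le_rfl
      have hmd := hmono (le_of_lt hij)
      rcases eq_or_ne j a0 with rfl | hja
      · rcases eq_or_ne i a0 with rfl | hia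
        · omega
        · have hib : i ≠ b0 := by omega
          rw [hDother i hia hib, hDa0]
          omega
      · rcases eq_or_ne j b0 with rfl | hjb
        · rcases eq_or_ne i a0 with rfl | hia
          · rw [hDb0, hDa0]
            omega
          · have hib : i ≠ b0 := by omega
            rw [hDother i hia hib, hDb0]
            omega
        · rw [hDother j hja hjb]
          rcases eq_or_ne i a0 with rfl | hia
          · rw [hDa0]
            -- j > a0, j ≠ b0 : show d j ≤ d a0 - 1
            rcases Nat.lt_or_ge t p with htlt | htge
            · have : a0 = t - 1 := by rw [ha0def, if_pos htlt]
              have hjt : t ≤ j := by omega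
              have := hmono hjt
              omega
            · have hteq : t = p := by omega
              have : a0 = p - 2 := by rw [ha0def, if_neg (by omega)]
              have hjp : p ≤ j := by omega
              have := hpz j hjp
              omega
          · rcases eq_or_ne i b0 with rfl | hib
            · rw [hDb0]
              have hjp : p ≤ j := by omega
              have := hpz j hjp
              omega
            · rw [hDother i hia hib]
              exact hmd
    have hzD : ∀ j, n ≤ j → D j = 0 := red_zero hz
    have hS2 : 2 ≤ S := by
      rcases heven with ⟨m, hm⟩
      omega
    have hsumD : Lsum D n = S - 2 := by
      have hrl := red_Lsum hab ha1 hdb0 (d := d) n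
      rw [if_pos ha0n, if_pos hb0n, ← hDdef] at hrl
      omega
    have hevenD : Even (S - 2) := by
      rcases heven with ⟨m, hm⟩
      exact ⟨m - 1, by omega⟩
    have hEGD : EGseq n D := by
      rw [hDdef]
      exact EG_pres hmono hEG (by rw [hsum]; exact heven) hpz hpp hpn hblock htc htp h1t hcp
    obtain ⟨G', hG'⟩ := IH (S - 2) (by omega) n D hmonoD hzD hsumD hevenD hEGD
    set va : Fin n := ⟨a0, ha0n⟩ with hvadef
    set vb : Fin n := ⟨b0, hb0n⟩ with hvbdef
    have hvab : va ≠ vb := by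
      intro h
      exact hab (congrArg Fin.val h)
    have hvala : (va : Fin n).1 = a0 := rfl
    have hvalb : (vb : Fin n).1 = b0 := rfl
    have hdegva : degC G' va = d a0 - 1 := by rw [hG' va]; exact hDa0
    have hdegvb : degC G' vb = d b0 - 1 := by rw [hG' vb]; exact hDb0
    have hvne : ∀ v : Fin n, v ≠ va → v ≠ vb → D v.1 = d v.1 := by
      intro v h1 h2
      refine hDother v.1 (fun h => h1 (Fin.ext h)) (fun h => h2 (Fin.ext h))
    by_cases hadj : G'.Adj va vb
    · -- need a swap pair
      classical
      have hpair : ∃ x y, G'.Adj x y ∧ ¬G'.Adj va x ∧ ¬G'.Adj vb y ∧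
          x ≠ va ∧ x ≠ vb ∧ y ≠ va ∧ y ≠ vb := by
        by_contra hno
        push_neg at hno
        -- Step A
        have hstepA : ∀ x : Fin n, ¬G'.Adj va x → x ≠ va → degC G' x < d b0 := by
          intro x hvax hxva
          have hxvb : x ≠ vb := by
            intro h
            rw [h] at hvax
            exact hvax hadj
          have hsub : {w | G'.Adj x w} ⊆ insert vb ({w | G'.Adj vb w} \ {va}) := by
            intro y hy
            simp only [Set.mem_setOf_eq] at hy
            have hyva : y ≠ va := by
              intro h
              rw [h] at hy
              exact hvax hy.symm
            by_cases hyvb : y = vb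
            · rw [hyvb]; exact Set.mem_insert _ _
            · by_cases hvby : G'.Adj vb y
              · exact Set.mem_insert_of_mem _ ⟨hvby, hyva⟩
              · exact absurd (hno x y hy hvax hvby hxva hxvb hyva) hyvb
          have h1 : degC G' x ≤ ({w | G'.Adj vb w} \ {va}).ncard + 1 := by
            calc degC G' x ≤ Set.ncard (insert vb ({w | G'.Adj vb w} \ {va})) :=
                  Set.ncard_le_ncard hsub (Set.toFinite _)
              _ ≤ _ := Set.ncard_insert_le _ _
          have h2 : ({w | G'.Adj vb w} \ {va}).ncard + 1 = degC G' vb := by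
            rw [degC]
            exact Set.ncard_diff_singleton_add_one (by exact hadj.symm) (Set.toFinite _)
          omega
        -- counting
        set Nbd : Finset (Fin n) := univ.filter (fun w => G'.Adj va w ∨ w = va) with hNbddef
        have hNbdins : Nbd = insert va (univ.filter (fun w => G'.Adj va w)) := by
          ext w
          simp only [hNbddef, Finset.mem_filter, Finset.mem_insert, Finset.mem_univ,
            true_and]
          tauto
        have hNbdcard : Nbd.card = c := by
          rw [hNbdins, Finset.card_insert_of_notMem (by
            simp only [Finset.mem_filter, Finset.mem_univ, true_and]
            exact fun h => G'.loopless.irrefl va h)]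
          have : (univ.filter (fun w => G'.Adj va w)).card = degC G' va :=
            (degC_eq_card G' va).symm
          omega
        have hAbar : Nbdᶜ.card = n - c := by
          rw [Finset.card_compl, hNbdcard]
          simp
        have hsubBad : Nbdᶜ ⊆ univ.filter (fun w : Fin n => p ≤ w.1) := by
          intro w hw
          simp only [Finset.mem_compl, hNbddef, Finset.mem_filter, Finset.mem_univ,
            true_and, not_or] at hw
          obtain ⟨hwadj, hwva⟩ := hw
          simp only [Finset.mem_filter, Finset.mem_univ, true_and]
          by_contra hwp
          push_neg at hwp
          have hdc := hstepA w hwadj hwva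
          rw [hG' w] at hdc
          have hwa0 : w.1 ≠ a0 := fun h => hwva (Fin.ext h)
          have hwb0 : w.1 ≠ b0 := by
            intro h
            have : w = vb := Fin.ext h
            rw [this] at hwadj
            exact hwadj hadj
          rw [hDother w.1 hwa0 hwb0] at hdc
          have : d b0 ≤ d w.1 := hmono (by omega)
          omega
        have hcardBad : (univ.filter (fun w : Fin n => p ≤ w.1)).card = n - p := by
          have h1 : (univ.filter (fun w : Fin n => p ≤ w.1)).card
              = ∑ w : Fin n, (if p ≤ w.1 then 1 else 0) := Finset.card_filter _ _
          have h2 : ∑ w : Fin n, (if p ≤ (w : Fin n).1 then 1 else 0)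
              = ∑ j ∈ Finset.range n, (if p ≤ j then 1 else 0) :=
            Fin.sum_univ_eq_sum_range (fun j => if p ≤ j then 1 else 0) n
          have h3 : ∑ j ∈ Finset.range n, (if p ≤ j then 1 else 0)
              = ∑ j ∈ Finset.Ico p n, 1 := by
            rw [Finset.range_eq_Ico, ← Finset.sum_Ico_consecutive _ (Nat.zero_le p) hpn]
            have : ∑ j ∈ Finset.Ico 0 p, (if p ≤ j then 1 else 0) = 0 :=
              Finset.sum_eq_zero (fun j hj => by
                rw [Finset.mem_Ico] at hj
                rw [if_neg (by omega)])
            have h4 : ∑ j ∈ Finset.Ico p n, (if p ≤ j then 1 else 0)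
                = ∑ j ∈ Finset.Ico p n, 1 :=
              Finset.sum_congr rfl (fun j hj => by
                rw [Finset.mem_Ico] at hj
                rw [if_pos hj.1])
            omega
          rw [h1, h2, h3, Finset.sum_const, Nat.card_Ico, smul_eq_mul, mul_one]
        have hle := Finset.card_le_card hsubBad
        rw [hAbar, hcardBad] at hle
        omega
      obtain ⟨x, y, hxy, hax, hby, hxva, hxvb, hyva, hyvb⟩ := hpair
      refine ⟨swapE G' va vb x y, fun v => ?_⟩
      rcases eq_or_ne v va with rfl | hva
      · rw [swapE_degC_a hxy hax hby hvab hxva.symm hyva.symm hxvb.symm hyvb.symm,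
          hdegva, hvala]
        omega
      · rcases eq_or_ne v vb with rfl | hvb
        · rw [swapE_degC_b hxy hax hby hvab hxva.symm hyva.symm hxvb.symm hyvb.symm,
            hdegvb, hvalb]
          omega
        · rcases eq_or_ne v x with rfl | hvx
          · rw [swapE_degC_x hxy hax hby hvab hxva.symm hyva.symm hxvb.symm hyvb.symm,
              hG' v, hvne v hva hvb]
          · rcases eq_or_ne v y with rfl | hvy
            · rw [swapE_degC_y hxy hax hby hvab hxva.symm hyva.symm hxvb.symm hyvb.symm,
                hG' v, hvne v hva hvb]
            · rw [swapE_degC_other hxy hax hby hvab hxva.symm hyva.symm hxvb.symm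
                hyvb.symm v hva hvb hvx hvy, hG' v, hvne v hva hvb]
    · -- just add the edge
      refine ⟨addE G' va vb, fun v => ?_⟩
      rcases eq_or_ne v va with rfl | hva
      · rw [addE_degC_a G' va vb hvab hadj, hdegva, hvala]
        omega
      · rcases eq_or_ne v vb with rfl | hvb
        · rw [addE_degC_b G' va vb hvab hadj, hdegvb, hvalb]
          omega
        · rw [addE_degC_other G' va vb v hva hvb, hG' v, hvne v hva hvb]

end NWaux

namespace NWaux
open Finset

/-- 0-indexed part sequence of a partition -/
def lam {nn : ℕ} (pp : nn.Partition) : ℕ → ℕ :=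
  fun j => (pp.parts.sort (· ≥ ·)).getD j 0

lemma partOf_eq_lam {nn : ℕ} (pp : nn.Partition) (k : ℕ) :
    partOf pp k = lam pp (k - 1) := rfl

lemma lam_length {nn : ℕ} (pp : nn.Partition) :
    (pp.parts.sort (· ≥ ·)).length = Multiset.card pp.parts :=
  Multiset.length_sort _

lemma lam_zero {nn : ℕ} (pp : nn.Partition) :
    ∀ j, Multiset.card pp.parts ≤ j → lam pp j = 0 := by
  intro j hj
  exact List.getD_eq_default _ _ (by rw [lam_length]; exact hj)

lemma lam_antitone {nn : ℕ} (pp : nn.Partition) : Antitone (lam pp) := by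
  intro i j hij
  unfold lam
  rcases Nat.lt_or_ge j (pp.parts.sort (· ≥ ·)).length with hj | hj
  · have hi : i < (pp.parts.sort (· ≥ ·)).length := lt_of_le_of_lt hij hj
    rw [List.getD_eq_get _ _ ⟨j, hj⟩, List.getD_eq_get _ _ ⟨i, hi⟩]
    have hs := Multiset.pairwise_sort (α := ℕ) pp.parts (· ≥ ·)
    exact hs.rel_get_of_le (Fin.mk_le_mk.2 hij)
  · rw [List.getD_eq_default _ _ hj]
    exact Nat.zero_le _

lemma lam_pos {nn : ℕ} (pp : nn.Partition) :
    ∀ j, j < Multiset.card pp.parts → 1 ≤ lam pp j := by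
  intro j hj
  have hj' : j < (pp.parts.sort (· ≥ ·)).length := by rw [lam_length]; exact hj
  unfold lam
  rw [List.getD_eq_get _ _ ⟨j, hj'⟩]
  refine pp.parts_pos ?_
  rw [← Multiset.mem_sort (· ≥ ·)]
  exact List.get_mem _ _

/-- sum of a mapped list written via `getD` -/
lemma list_sum_getD (l : List ℕ) (f : ℕ → ℕ) :
    (l.map f).sum = ∑ j ∈ Finset.range l.length, f (l.getD j 0) := by
  induction l with
  | nil => simp
  | cons a l ih =>
    rw [List.map_cons, List.sum_cons, List.length_cons, Finset.sum_range_succ',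
      ih]
    simp only [List.getD_cons_succ, List.getD_cons_zero]
    omega

lemma lam_sum {nn : ℕ} (pp : nn.Partition) :
    Lsum (lam pp) (Multiset.card pp.parts) = nn := by
  have h1 : ((pp.parts.sort (· ≥ ·)).map id).sum = nn := by
    rw [List.map_id, ← Multiset.sum_coe, Multiset.sort_eq]
    exact pp.parts_sum
  rw [list_sum_getD, lam_length] at h1
  exact h1

lemma conj_sum_multiset (s : Multiset ℕ) (k : ℕ) :
    ∑ l ∈ Finset.Icc 1 k, Multiset.card (s.filter (fun m => l ≤ m))
      = (s.map (fun a => min k a)).sum := by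
  induction s using Multiset.induction_on with
  | empty => simp
  | cons a s ih =>
    have hstep : ∀ l, Multiset.card ((a ::ₘ s).filter (fun m => l ≤ m))
        = Multiset.card (s.filter (fun m => l ≤ m)) + (if l ≤ a then 1 else 0) := by
      intro l
      rw [Multiset.filter_cons]
      split_ifs with h
      · rw [Multiset.card_add, Multiset.card_singleton]
        omega
      · simp
    rw [Finset.sum_congr rfl (fun l _ => hstep l), Finset.sum_add_distrib, ih,
      Multiset.map_cons, Multiset.sum_cons]
    have : ∑ l ∈ Finset.Icc 1 k, (if l ≤ a then 1 else 0) = min k a := by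
      rw [← Finset.sum_filter]
      have hf : (Finset.Icc 1 k).filter (fun l => l ≤ a) = Finset.Icc 1 (min k a) := by
        ext j
        simp only [Finset.mem_filter, Finset.mem_Icc]
        omega
      rw [hf, Finset.sum_const, Nat.card_Icc, smul_eq_mul, mul_one]
      omega
    omega

lemma conj_sum {nn : ℕ} (pp : nn.Partition) (k : ℕ) :
    ∑ l ∈ Finset.Icc 1 k, conjPart pp l
      = ∑ j ∈ Finset.range (Multiset.card pp.parts), min k (lam pp j) := by
  have h1 := conj_sum_multiset pp.parts k
  have h2 : (pp.parts.map (fun a => min k a)).sum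
      = ∑ j ∈ Finset.range (Multiset.card pp.parts), min k (lam pp j) := by
    conv_lhs => rw [← Multiset.sort_eq pp.parts (· ≥ ·)]
    rw [Multiset.map_coe, Multiset.sum_coe, list_sum_getD, lam_length]
    rfl
  unfold conjPart
  rw [h1, h2]

lemma sum_Icc_one (f : ℕ → ℕ) (k : ℕ) :
    ∑ l ∈ Finset.Icc 1 k, f l = ∑ j ∈ Finset.range k, f (j + 1) := by
  rw [← Finset.Ico_add_one_right_eq_Icc, Finset.sum_Ico_eq_sum_range]
  exact Finset.sum_congr rfl (fun j _ => by rw [Nat.add_comm])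

lemma partOf_sum {nn : ℕ} (pp : nn.Partition) (k : ℕ) :
    ∑ l ∈ Finset.Icc 1 k, partOf pp l = Lsum (lam pp) k := by
  rw [sum_Icc_one]
  exact Finset.sum_congr rfl (fun j _ => by rw [partOf_eq_lam, Nat.add_sub_cancel])

lemma rank_sum {nn : ℕ} (pp : nn.Partition) (k : ℕ) :
    ∑ l ∈ Finset.Icc 1 k, rank pp l
      = (Lsum (lam pp) k : ℤ) - (∑ l ∈ Finset.Icc 1 k, conjPart pp l : ℤ) := by
  unfold rank
  rw [Finset.sum_sub_distrib, ← partOf_sum]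
  push_cast
  ring

end NWaux

namespace NWaux
open Finset

lemma durfee_bdd {nn : ℕ} (pp : nn.Partition) :
    BddAbove {k : ℕ | k ≤ partOf pp k} := by
  refine ⟨Multiset.card pp.parts, fun k hk => ?_⟩
  simp only [Set.mem_setOf_eq] at hk
  by_contra hcon
  push_neg at hcon
  rw [partOf_eq_lam, lam_zero pp _ (by omega)] at hk
  omega

lemma durfee_mem {nn : ℕ} (pp : nn.Partition) :
    durfee pp ≤ partOf pp (durfee pp) := by
  have hne : Set.Nonempty {k : ℕ | k ≤ partOf pp k} := ⟨0, by simp [Set.mem_setOf_eq]⟩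
  exact Nat.sSup_mem hne (durfee_bdd pp)

lemma le_durfee {nn : ℕ} (pp : nn.Partition) {k : ℕ} (h : k ≤ partOf pp k) :
    k ≤ durfee pp := by
  have hmem : k ∈ {k : ℕ | k ≤ partOf pp k} := h
  exact le_csSup (durfee_bdd pp) hmem

lemma Msum_cutR {d : ℕ → ℕ} {m N k : ℕ} (hmN : m ≤ N)
    (hz : ∀ j, m ≤ j → d j = 0) (hkm : k ≤ m) :
    Msum N d k = Msum m d k := by
  rw [Msum_cutL (n := N) hkm hmN]
  have : ∑ j ∈ Finset.Ico m N, min k (d j) = 0 :=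
    Finset.sum_eq_zero (fun j hj => by
      rw [Finset.mem_Ico] at hj
      rw [hz j hj.1]
      omega)
  unfold Msum
  omega

lemma k_le_parts {nn : ℕ} (pp : nn.Partition) {k : ℕ} (hk1 : 1 ≤ k)
    (hkK : k ≤ durfee pp) : k ≤ partOf pp k ∧ k ≤ Multiset.card pp.parts := by
  have hK := durfee_mem pp
  have h1 : k ≤ partOf pp k := by
    calc k ≤ durfee pp := hkK
      _ ≤ partOf pp (durfee pp) := hK
      _ ≤ partOf pp k := by
          rw [partOf_eq_lam, partOf_eq_lam]
          exact lam_antitone pp (by omega)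
  refine ⟨h1, ?_⟩
  by_contra hcon
  push_neg at hcon
  rw [partOf_eq_lam, lam_zero pp _ (by omega)] at h1
  omega

lemma NW_iff_EG {nn : ℕ} (pp : nn.Partition) (k : ℕ) (hk1 : 1 ≤ k)
    (hkK : k ≤ durfee pp) :
    ((∑ l ∈ Finset.Icc 1 k, rank pp l) ≤ -(k : ℤ)) ↔
      Lsum (lam pp) k ≤ k * (k - 1)
        + Msum (Multiset.card pp.parts) (lam pp) k := by
  obtain ⟨hpk, hkm⟩ := k_le_parts pp hk1 hkK
  have hsq : ∑ j ∈ Finset.range k, min k (lam pp j) = k * k := by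
    rw [Finset.sum_congr rfl (fun j hj => ?_), Finset.sum_const, Finset.card_range,
      smul_eq_mul]
    rw [Finset.mem_range] at hj
    have h2 : lam pp (k-1) ≤ lam pp j := lam_antitone pp (by omega)
    rw [partOf_eq_lam] at hpk
    omega
  have hsplit : ∑ j ∈ Finset.range (Multiset.card pp.parts), min k (lam pp j)
      = k * k + Msum (Multiset.card pp.parts) (lam pp) k := by
    rw [Finset.range_eq_Ico, ← Finset.sum_Ico_consecutive _ (Nat.zero_le k) hkm,
      ← Finset.range_eq_Ico, hsq]
    rfl
  have hconj := conj_sum pp k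
  rw [hsplit] at hconj
  have hrank := rank_sum pp k
  have hkk : k * (k - 1) + k = k * k := by
    cases k with
    | zero => omega
    | succ v => rw [Nat.succ_sub_one]; ring
  have hg : (∑ l ∈ Finset.Icc 1 k, (conjPart pp l : ℤ))
      = ((∑ l ∈ Finset.Icc 1 k, conjPart pp l : ℕ) : ℤ) := (Nat.cast_sum _ _).symm
  rw [hrank]
  omega

lemma EG_of_NW {nn : ℕ} (pp : nn.Partition)
    (h : ∀ k : ℕ, 1 ≤ k → k ≤ durfee pp →
      (∑ l ∈ Finset.Icc 1 k, rank pp l) ≤ -(k : ℤ)) :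
    EGseq (Multiset.card pp.parts) (lam pp) := by
  intro k hk1
  induction k with
  | zero => omega
  | succ k ih =>
    rcases le_or_gt (k + 1) (durfee pp) with hkK | hKk
    · exact (NW_iff_EG pp (k+1) (by omega) hkK).1 (h (k+1) (by omega) hkK)
    · rcases Nat.eq_zero_or_pos k with rfl | hk
      · -- durfee = 0 : no parts
        have hm0 : Multiset.card pp.parts = 0 := by
          by_contra hm
          have h1 : 1 ≤ lam pp 0 := lam_pos pp 0 (by omega)
          have : (1 : ℕ) ≤ durfee pp := le_durfee pp (by
            rw [partOf_eq_lam]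
            simpa using h1)
          omega
        have hL : Lsum (lam pp) 1 = 0 := by
          unfold Lsum
          rw [Finset.sum_range_one]
          exact lam_zero pp 0 (by omega)
        show Lsum (lam pp) 1 ≤ 1 * (1 - 1) + Msum (Multiset.card pp.parts) (lam pp) 1
        omega
      · have hstep : lam pp k ≤ k := by
          by_contra hcon
          push_neg at hcon
          have : k + 1 ≤ durfee pp := le_durfee pp (by
            rw [partOf_eq_lam, Nat.add_sub_cancel]
            omega)
          omega
        exact EG_step (lam_zero pp) hstep (ih hk)

lemma sum_fin_lt {N k : ℕ} (hk : k ≤ N) (F : ℕ → ℕ) :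
    ∑ i ∈ Finset.univ.filter (fun i : Fin N => i.1 < k), F i.1
      = ∑ j ∈ Finset.range k, F j := by
  rw [Finset.sum_filter]
  rw [Fin.sum_univ_eq_sum_range (fun j => if j < k then F j else 0) N]
  rw [Finset.range_eq_Ico, ← Finset.sum_Ico_consecutive _ (Nat.zero_le k) hk,
    ← Finset.range_eq_Ico]
  have h1 : ∑ j ∈ Finset.range k, (if j < k then F j else 0) = ∑ j ∈ Finset.range k, F j :=
    Finset.sum_congr rfl (fun j hj => by
      rw [Finset.mem_range] at hj
      rw [if_pos hj])
  have h2 : ∑ j ∈ Finset.Ico k N, (if j < k then F j else 0) = 0 :=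
    Finset.sum_eq_zero (fun j hj => by
      rw [Finset.mem_Ico] at hj
      rw [if_neg (by omega)])
  omega

lemma sum_fin_ge {N k : ℕ} (hk : k ≤ N) (F : ℕ → ℕ) :
    ∑ i ∈ Finset.univ.filter (fun i : Fin N => ¬ i.1 < k), F i.1
      = ∑ j ∈ Finset.Ico k N, F j := by
  rw [Finset.sum_filter]
  rw [Fin.sum_univ_eq_sum_range (fun j => if ¬ j < k then F j else 0) N]
  rw [Finset.range_eq_Ico, ← Finset.sum_Ico_consecutive _ (Nat.zero_le k) hk]
  have h1 : ∑ j ∈ Finset.Ico 0 k, (if ¬ j < k then F j else 0) = 0 :=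
    Finset.sum_eq_zero (fun j hj => by
      rw [Finset.mem_Ico] at hj
      rw [if_neg (by omega)])
  have h2 : ∑ j ∈ Finset.Ico k N, (if ¬ j < k then F j else 0)
      = ∑ j ∈ Finset.Ico k N, F j :=
    Finset.sum_congr rfl (fun j hj => by
      rw [Finset.mem_Ico] at hj
      rw [if_pos (by omega)])
  omega

lemma card_fin_lt {N k : ℕ} (hk : k ≤ N) :
    (Finset.univ.filter (fun i : Fin N => i.1 < k)).card = k := by
  have h := sum_fin_lt hk (fun _ => 1)
  simp only [Finset.sum_const, Finset.card_range, smul_eq_mul, mul_one] at h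
  exact h

end NWaux

namespace NWaux
open Finset

lemma suff_dir {nn : ℕ} (hn : Even nn) (pp : nn.Partition)
    (h : ∀ k : ℕ, 1 ≤ k → k ≤ durfee pp →
      (∑ l ∈ Finset.Icc 1 k, rank pp l) ≤ -(k : ℤ)) : IsGraphical pp := by
  classical
  have hEG := EG_of_NW pp h
  obtain ⟨G, hG⟩ := EG_sufficient nn (Multiset.card pp.parts) (lam pp)
    (lam_antitone pp) (lam_zero pp) (lam_sum pp) hn hEG
  refine ⟨Multiset.card pp.parts, G, ?_⟩
  have hfun : (fun v : Fin (Multiset.card pp.parts) => Set.ncard {w | G.Adj v w})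
      = fun v => lam pp v.1 := funext (fun v => hG v)
  rw [hfun, Fin.univ_val_map]
  have hofn : List.ofFn (fun v : Fin (Multiset.card pp.parts) => lam pp v.1)
      = pp.parts.sort (· ≥ ·) := by
    apply List.ext_get
    · rw [List.length_ofFn, lam_length]
    · intro j h1 h2
      rw [List.get_ofFn]
      show (pp.parts.sort (· ≥ ·)).getD j 0 = _
      exact List.getD_eq_get _ _ ⟨j, h2⟩
  rw [hofn]
  have hflt : Multiset.filter (fun d => 0 < d)
      ((pp.parts.sort (· ≥ ·) : List ℕ) : Multiset ℕ)
      = ((pp.parts.sort (· ≥ ·) : List ℕ) : Multiset ℕ) := by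
    refine Multiset.filter_eq_self.2 (fun a ha => ?_)
    refine pp.parts_pos ?_
    rwa [← Multiset.sort_eq pp.parts (· ≥ ·)]
  rw [hflt, Multiset.sort_eq]

lemma nec_dir {nn : ℕ} (pp : nn.Partition) (hGr : IsGraphical pp) :
    ∀ k : ℕ, 1 ≤ k → k ≤ durfee pp →
      (∑ l ∈ Finset.Icc 1 k, rank pp l) ≤ -(k : ℤ) := by
  classical
  obtain ⟨N, G, hfil0⟩ := hGr
  have hfil : (Multiset.map (fun v : Fin N => degC G v) Finset.univ.val).filter
      (fun d => 0 < d) = pp.parts := hfil0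
  intro k hk1 hkK
  obtain ⟨hpk, hkm⟩ := k_le_parts pp hk1 hkK
  set e : Fin N ≃ Fin N := Fin.revPerm.trans (Tuple.sort (fun v => degC G v)) with hedef
  set g : ℕ → ℕ := fun j => if hj : j < N then degC G (e ⟨j, hj⟩) else 0 with hgdef
  have hge : ∀ (j : ℕ) (hj : j < N), g j = degC G (e ⟨j, hj⟩) := fun j hj => dif_pos hj
  have hgz : ∀ j, N ≤ j → g j = 0 := fun j hj => dif_neg (by omega)
  have hganti : Antitone g := by
    intro i j hij
    rcases Nat.lt_or_ge j N with hj | hj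
    · have hi : i < N := by omega
      rw [hge j hj, hge i hi]
      have hmon := Tuple.monotone_sort (fun v => degC G v)
      have hrev : Fin.rev (⟨j, hj⟩ : Fin N) ≤ Fin.rev ⟨i, hi⟩ :=
        Fin.rev_le_rev.2 hij
      exact hmon hrev
    · rw [hgz j hj]
      exact Nat.zero_le _
  have hM0 : Multiset.map (fun v : Fin N => degC G v) Finset.univ.val
      = ↑(List.ofFn fun v : Fin N => g v.1) := by
    have h1 : (fun v : Fin N => g v.1) = (fun v : Fin N => degC G (e v)) := by
      funext v
      rw [hge v.1 v.2]
    rw [← Fin.univ_val_map, h1]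
    show Multiset.map _ _ = Multiset.map ((fun v => degC G v) ∘ e) Finset.univ.val
    rw [← Multiset.map_map]
    congr 1
    have h2 : Multiset.map (⇑e) Finset.univ.val
        = Multiset.map (⇑e.toEmbedding) Finset.univ.val := rfl
    rw [h2, ← Finset.map_val, Finset.map_univ_equiv]
  set z := Multiset.card (Multiset.filter (fun d => ¬ 0 < d)
      (Multiset.map (fun v : Fin N => degC G v) Finset.univ.val)) with hzdef
  have hrep : Multiset.filter (fun d => ¬ 0 < d)
      (Multiset.map (fun v : Fin N => degC G v) Finset.univ.val)
      = Multiset.replicate z 0 := by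
    rw [Multiset.eq_replicate]
    refine ⟨rfl, fun b hb => ?_⟩
    have := Multiset.mem_filter.1 hb
    omega
  have hsplitM : Multiset.map (fun v : Fin N => degC G v) Finset.univ.val
      = pp.parts + Multiset.replicate z 0 := by
    conv_lhs => rw [← Multiset.filter_add_not (fun d => 0 < d)
      (Multiset.map (fun v : Fin N => degC G v) Finset.univ.val)]
    rw [hfil, hrep]
  have hcards : N = Multiset.card pp.parts + z := by
    have h1 : Multiset.card (Multiset.map (fun v : Fin N => degC G v)
        Finset.univ.val) = N := by
      rw [Multiset.card_map]
      have : Multiset.card Finset.univ.val = (Finset.univ : Finset (Fin N)).card := rfl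
      rw [this, Finset.card_univ, Fintype.card_fin]
    rw [hsplitM, Multiset.card_add, Multiset.card_replicate] at h1
    omega
  have hlist : List.ofFn (fun v : Fin N => g v.1)
      = pp.parts.sort (· ≥ ·) ++ List.replicate z 0 := by
    apply List.Perm.eq_of_pairwise' (r := (· ≥ ·))
    rotate_right
    · have hms : Multiset.ofList (List.ofFn (fun v : Fin N => g v.1))
          = Multiset.ofList (pp.parts.sort (· ≥ ·) ++ List.replicate z 0) := by
        rw [← Multiset.coe_add, Multiset.coe_replicate, Multiset.sort_eq,
          ← hsplitM, hM0]
      exact Multiset.coe_eq_coe.1 hms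
    · rw [List.pairwise_iff_get]
      intro i j hij
      rw [List.get_ofFn, List.get_ofFn]
      show g _ ≥ g _
      refine hganti ?_
      simp only [Fin.coe_cast]
      exact Nat.le_of_lt hij
    · rw [List.pairwise_append]
      refine ⟨Multiset.pairwise_sort _ _, ?_, ?_⟩
      · rw [List.pairwise_replicate]
        right
        exact le_rfl
      · intro a ha b hb
        rw [List.eq_of_mem_replicate hb]
        exact Nat.zero_le a
  have hlam : ∀ j, lam pp j = g j := by
    intro j
    rcases Nat.lt_or_ge j N with hj | hj
    · have h1 : g j = (List.ofFn (fun v : Fin N => g v.1)).getD j 0 := by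
        rw [List.getD_eq_get _ _ ⟨j, by rw [List.length_ofFn]; exact hj⟩, List.get_ofFn]
        rfl
      rw [h1, hlist]
      show (pp.parts.sort (· ≥ ·)).getD j 0 = _
      rcases Nat.lt_or_ge j (pp.parts.sort (· ≥ ·)).length with hjm | hjm
      · rw [List.getD_append _ _ _ _ hjm]
      · rw [List.getD_append_right _ _ _ _ hjm, List.getD_eq_default _ _ hjm]
        rcases Nat.lt_or_ge (j - (pp.parts.sort (· ≥ ·)).length) z with hz2 | hz2
        · rw [List.getD_eq_get _ _ ⟨_, by rw [List.length_replicate]; exact hz2⟩]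
          rw [List.get_eq_getElem, List.getElem_replicate]
        · rw [List.getD_eq_default _ _ (by rw [List.length_replicate]; exact hz2)]
    · rw [hgz j hj, lam_zero pp j (by omega)]
  have hkN : k ≤ N := by omega
  set Uk := Finset.map e.toEmbedding
    (Finset.univ.filter (fun i : Fin N => i.1 < k)) with hUdef
  have hcardU : Uk.card = k := by rw [hUdef, Finset.card_map, card_fin_lt hkN]
  have hsum1 : ∑ v ∈ Uk, degC G v = Lsum g k := by
    rw [hUdef, Finset.sum_map]
    have hcg : ∀ i ∈ Finset.univ.filter (fun i : Fin N => i.1 < k),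
        degC G (e.toEmbedding i) = g i.1 := by
      intro i _
      rw [hge i.1 i.2]
      rfl
    rw [Finset.sum_congr rfl hcg, sum_fin_lt hkN g]
    rfl
  have hcompl : Ukᶜ = Finset.map e.toEmbedding
      (Finset.univ.filter (fun i : Fin N => ¬ i.1 < k)) := by
    ext w
    simp [hUdef, Finset.mem_map_equiv]
  have hsum2 : ∑ v ∈ Ukᶜ, min k (degC G v) = Msum N g k := by
    rw [hcompl, Finset.sum_map]
    have hcg : ∀ i ∈ Finset.univ.filter (fun i : Fin N => ¬ i.1 < k),
        min k (degC G (e.toEmbedding i)) = min k (g i.1) := by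
      intro i _
      rw [hge i.1 i.2]
      rfl
    rw [Finset.sum_congr rfl hcg, sum_fin_ge hkN (fun j => min k (g j))]
    rfl
  have hEGk := sum_deg_le G Uk
  rw [hsum1, hcardU, hsum2] at hEGk
  refine (NW_iff_EG pp k hk1 hkK).2 ?_
  have hLeq : Lsum (lam pp) k = Lsum g k :=
    Finset.sum_congr rfl (fun j _ => hlam j)
  have hMeq : Msum (Multiset.card pp.parts) (lam pp) k = Msum N g k := by
    have h1 : Msum N (lam pp) k = Msum N g k :=
      Finset.sum_congr rfl (fun j _ => by rw [hlam j])
    rw [← Msum_cutR (N := N) (m := Multiset.card pp.parts) (by omega)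
      (lam_zero pp) hkm, h1]
  rw [hLeq, hMeq]
  exact hEGk

end NWaux

/-- Nash–Williams criterion: a partition of an even integer `n` is graphical
iff `∑_{l=1}^k R_l ≤ -k` for all `1 ≤ k ≤ K`, where `K` is the Durfee square size. -/
theorem nash_williams_criterion (n : ℕ) (hn : Even n) (p : n.Partition) :
    IsGraphical p ↔
      ∀ k : ℕ, 1 ≤ k → k ≤ durfee p →
        (∑ l ∈ Finset.Icc 1 k, rank p l) ≤ -(k : ℤ) := by
  constructor
  · exact fun h => NWaux.nec_dir p h
  · exact fun h => NWaux.suff_dir hn p h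
end
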